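/- arXiv:1709.06672 — 12 statements merged into one kernel-verified Lean document; each statement's English description precedes it below -/
import Mathlib

section
/- For every n ∈ {3,4,5}, every theorem of E5Ln⁻ is a theorem of E6Ln⁻; in particular, the formulas □(Kφ→KKφ) and □(¬Kφ→K¬Kφ) are theorems of E6Ln⁻ for every formula φ. -/
/-- Formulas of the full modal-epistemic language `Fm`. -/
inductive Fm : Type
  | var : Nat → Fm
  | bot : Fm
  | and : Fm → Fm → Fm
  | or : Fm → Fm → Fm
  | imp : Fm → Fm → Fm
  | box : Fm → Fm
  | k : Fm → Fm

namespace Fm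

def neg (φ : Fm) : Fm := φ.imp Fm.bot

def top : Fm := Fm.neg Fm.bot

def biimp (φ ψ : Fm) : Fm := (φ.imp ψ).and (ψ.imp φ)

/-- Propositional identity as strict equivalence: `φ ≡ ψ := □(φ↔ψ)`. -/
def equiv (φ ψ : Fm) : Fm := Fm.box (Fm.biimp φ ψ)

def diam (φ : Fm) : Fm := Fm.neg (Fm.box (Fm.neg φ))

end Fm

/-- Hilbert-style axiom schemes for intuitionistic propositional logic,
instantiated over the full language (so that together with closure under MP
this yields exactly all substitution-instances of theorems of IPC). -/
inductive IPCAx : Fm → Prop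
  | k1 (φ ψ : Fm) : IPCAx (φ.imp (ψ.imp φ))
  | k2 (φ ψ χ : Fm) : IPCAx ((φ.imp (ψ.imp χ)).imp ((φ.imp ψ).imp (φ.imp χ)))
  | andI (φ ψ : Fm) : IPCAx (φ.imp (ψ.imp (φ.and ψ)))
  | andE1 (φ ψ : Fm) : IPCAx ((φ.and ψ).imp φ)
  | andE2 (φ ψ : Fm) : IPCAx ((φ.and ψ).imp ψ)
  | orI1 (φ ψ : Fm) : IPCAx (φ.imp (φ.or ψ))
  | orI2 (φ ψ : Fm) : IPCAx (ψ.imp (φ.or ψ))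
  | orE (φ ψ χ : Fm) : IPCAx ((φ.imp χ).imp ((ψ.imp χ).imp ((φ.or ψ).imp χ)))
  | efq (φ : Fm) : IPCAx (Fm.bot.imp φ)

/-- Scheme (INT): all theorems of IPC and their substitution-instances. -/
inductive IPCThm : Fm → Prop
  | ax {φ : Fm} : IPCAx φ → IPCThm φ
  | mp {φ ψ : Fm} : IPCThm (φ.imp ψ) → IPCThm φ → IPCThm ψ

/-- A specification of a logic of the hierarchy: all logics contain (INT), (A1),
(A2), (A3); the flags indicate which further axiom schemes are present. -/
structure LogicSpec : Type where
  hasA4 : Prop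
  hasA5 : Prop
  hasKBel : Prop
  hasCoRe : Prop
  hasIntRe : Prop
  hasE4 : Prop
  hasE5 : Prop
  hasPNB : Prop
  hasNNB : Prop

/-- The axioms of the logic specified by `S`. -/
inductive IsAxiom (S : LogicSpec) : Fm → Prop
  | int {φ : Fm} : IPCThm φ → IsAxiom S φ
  | a1 (φ ψ : Fm) : IsAxiom S ((Fm.box (φ.or ψ)).imp ((Fm.box φ).or (Fm.box ψ)))
  | a2 (φ : Fm) : IsAxiom S ((Fm.box φ).imp φ)
  | a3 (φ ψ : Fm) : IsAxiom S ((Fm.box (φ.imp ψ)).imp (Fm.box ((Fm.box φ).imp (Fm.box ψ))))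
  | a4 (φ : Fm) : S.hasA4 → IsAxiom S ((Fm.box φ).imp (Fm.box (Fm.box φ)))
  | a5 (φ : Fm) : S.hasA5 → IsAxiom S ((Fm.neg (Fm.box φ)).imp (Fm.box (Fm.neg (Fm.box φ))))
  | kbel (φ ψ : Fm) : S.hasKBel → IsAxiom S ((Fm.k (φ.imp ψ)).imp ((Fm.k φ).imp (Fm.k ψ)))
  | core (φ : Fm) : S.hasCoRe → IsAxiom S ((Fm.box φ).imp (Fm.box (Fm.k φ)))
  | intre (φ : Fm) : S.hasIntRe → IsAxiom S ((Fm.k φ).imp (Fm.neg (Fm.neg φ)))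
  | e4 (φ : Fm) : S.hasE4 → IsAxiom S ((Fm.k φ).imp (Fm.k (Fm.k φ)))
  | e5 (φ : Fm) : S.hasE5 → IsAxiom S ((Fm.neg (Fm.k φ)).imp (Fm.k (Fm.neg (Fm.k φ))))
  | pnb (φ : Fm) : S.hasPNB → IsAxiom S ((Fm.k φ).imp (Fm.box (Fm.k φ)))
  | nnb (φ : Fm) : S.hasNNB → IsAxiom S ((Fm.neg (Fm.k φ)).imp (Fm.box (Fm.neg (Fm.k φ))))

/-- Derivations from the hypotheses `Φ` over the axiom set `Ax`.  The parameter
`tnd` controls whether instances of the theorem scheme (TND) `φ ∨ ¬φ` may be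
used.  The rules are Modus Ponens (MP) and Axiom Necessitation (AN), the latter
applying to axioms only (not to (TND) instances nor to theorems). -/
inductive Deriv (Ax : Fm → Prop) (tnd : Prop) (Φ : Set Fm) : Fm → Prop
  | ax {φ : Fm} : Ax φ → Deriv Ax tnd Φ φ
  | hyp {φ : Fm} : φ ∈ Φ → Deriv Ax tnd Φ φ
  | tnd (φ : Fm) : tnd → Deriv Ax tnd Φ (φ.or (Fm.neg φ))
  | an {φ : Fm} : Ax φ → Deriv Ax tnd Φ (Fm.box φ)
  | mp {φ ψ : Fm} : Deriv Ax tnd Φ (φ.imp ψ) → Deriv Ax tnd Φ φ → Deriv Ax tnd Φ ψ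

/-- `Φ ⊢_S φ`. -/
def Derives (S : LogicSpec) (Φ : Set Fm) (φ : Fm) : Prop := Deriv (IsAxiom S) True Φ φ

/-- `⊢_S φ`. -/
def Thm (S : LogicSpec) (φ : Fm) : Prop := Derives S ∅ φ

/-- The modal logic `Ln` (n ∈ {3,4,5}): (INT)+(A1)+(A2)+(A3), plus (A4) if n ≥ 4
and (A5) if n ≥ 5. -/
def Lspec (n : Nat) : LogicSpec :=
  ⟨4 ≤ n, 5 ≤ n, False, False, False, False, False, False, False⟩

/-- `ELn⁻ = Ln + (KBel) + (CoRe)`. -/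
def ELmSpec (n : Nat) : LogicSpec :=
  ⟨4 ≤ n, 5 ≤ n, True, True, False, False, False, False, False⟩

/-- `E4Ln⁻ = ELn⁻ + (E4)`. -/
def E4LmSpec (n : Nat) : LogicSpec := { ELmSpec n with hasE4 := True }

/-- `E5Ln⁻ = E4Ln⁻ + (E5)`. -/
def E5LmSpec (n : Nat) : LogicSpec := { E4LmSpec n with hasE5 := True }

/-- `E6Ln⁻ = ELn⁻ + (PNB) + (NNB)`. -/
def E6LmSpec (n : Nat) : LogicSpec := { ELmSpec n with hasPNB := True, hasNNB := True }

/-- `ELn = ELn⁻ + (IntRe)`. -/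
def ELSpec (n : Nat) : LogicSpec := { ELmSpec n with hasIntRe := True }

def E4LSpec (n : Nat) : LogicSpec := { E4LmSpec n with hasIntRe := True }

def E5LSpec (n : Nat) : LogicSpec := { E5LmSpec n with hasIntRe := True }

def E6LSpec (n : Nat) : LogicSpec := { E6LmSpec n with hasIntRe := True }

/-- Membership in the hierarchy of logics considered in the paper. -/
def InHierarchy (S : LogicSpec) : Prop :=
  ∃ n, n ∈ ({3, 4, 5} : Set Nat) ∧
    (S = Lspec n ∨ S = ELmSpec n ∨ S = E4LmSpec n ∨ S = E5LmSpec n ∨ S = E6LmSpec n ∨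
      S = ELSpec n ∨ S = E4LSpec n ∨ S = E5LSpec n ∨ S = E6LSpec n)

/-- The S5-style logics: `EL5⁻`, `EL5`, `EkL5⁻`, `EkL5` for k ∈ {4,5,6}. -/
def L5Logics : Set LogicSpec :=
  {ELmSpec 5, E4LmSpec 5, E5LmSpec 5, E6LmSpec 5, ELSpec 5, E4LSpec 5, E5LSpec 5, E6LSpec 5}

section Stmt0Aux

lemma ipc_syl {a b c : Fm} (h1 : IPCThm (a.imp b)) (h2 : IPCThm (b.imp c)) :
    IPCThm (a.imp c) :=
  IPCThm.mp (IPCThm.mp (IPCThm.ax (IPCAx.k2 a b c))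
    (IPCThm.mp (IPCThm.ax (IPCAx.k1 (b.imp c) a)) h2)) h1

lemma ipc_comp (a b c : Fm) :
    IPCThm ((b.imp c).imp ((a.imp b).imp (a.imp c))) :=
  ipc_syl (IPCThm.ax (IPCAx.k1 (b.imp c) a)) (IPCThm.ax (IPCAx.k2 a b c))

lemma boxMP {S : LogicSpec} {Φ : Set Fm} {φ ψ : Fm}
    (h1 : Deriv (IsAxiom S) True Φ (Fm.box (φ.imp ψ)))
    (h2 : Deriv (IsAxiom S) True Φ (Fm.box φ)) :
    Deriv (IsAxiom S) True Φ (Fm.box ψ) :=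
  Deriv.mp (Deriv.mp (Deriv.ax (IsAxiom.a2 _))
    (Deriv.mp (Deriv.ax (IsAxiom.a3 φ ψ)) h1)) h2

lemma box_comp {S : LogicSpec} {Φ : Set Fm} {a b c : Fm}
    (h1 : Deriv (IsAxiom S) True Φ (Fm.box (a.imp b)))
    (h2 : Deriv (IsAxiom S) True Φ (Fm.box (b.imp c))) :
    Deriv (IsAxiom S) True Φ (Fm.box (a.imp c)) :=
  boxMP (boxMP (Deriv.an (IsAxiom.int (ipc_comp a b c))) h2) h1

lemma boxE4 (n : Nat) (φ : Fm) :
    Thm (E6LmSpec n) (Fm.box ((Fm.k φ).imp (Fm.k (Fm.k φ)))) :=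
  box_comp
    (box_comp (Deriv.an (IsAxiom.pnb φ True.intro))
      (Deriv.an (IsAxiom.core (Fm.k φ) True.intro)))
    (Deriv.an (IsAxiom.a2 (Fm.k (Fm.k φ))))

lemma boxE5 (n : Nat) (φ : Fm) :
    Thm (E6LmSpec n) (Fm.box ((Fm.neg (Fm.k φ)).imp (Fm.k (Fm.neg (Fm.k φ))))) :=
  box_comp
    (box_comp (Deriv.an (IsAxiom.nnb φ True.intro))
      (Deriv.an (IsAxiom.core (Fm.neg (Fm.k φ)) True.intro)))
    (Deriv.an (IsAxiom.a2 (Fm.k (Fm.neg (Fm.k φ)))))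

lemma thmE4 (n : Nat) (φ : Fm) :
    Thm (E6LmSpec n) ((Fm.k φ).imp (Fm.k (Fm.k φ))) :=
  Deriv.mp (Deriv.ax (IsAxiom.a2 _)) (boxE4 n φ)

lemma thmE5 (n : Nat) (φ : Fm) :
    Thm (E6LmSpec n) ((Fm.neg (Fm.k φ)).imp (Fm.k (Fm.neg (Fm.k φ)))) :=
  Deriv.mp (Deriv.ax (IsAxiom.a2 _)) (boxE5 n φ)

lemma lift56 {n : Nat} {φ : Fm} (h : Thm (E5LmSpec n) φ) : Thm (E6LmSpec n) φ := by
  induction h with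
  | ax ha =>
    cases ha with
    | int h => exact Deriv.ax (IsAxiom.int h)
    | a1 φ ψ => exact Deriv.ax (IsAxiom.a1 φ ψ)
    | a2 φ => exact Deriv.ax (IsAxiom.a2 φ)
    | a3 φ ψ => exact Deriv.ax (IsAxiom.a3 φ ψ)
    | a4 φ h => exact Deriv.ax (IsAxiom.a4 φ h)
    | a5 φ h => exact Deriv.ax (IsAxiom.a5 φ h)
    | kbel φ ψ h => exact Deriv.ax (IsAxiom.kbel φ ψ True.intro)
    | core φ h => exact Deriv.ax (IsAxiom.core φ True.intro)
    | intre φ h => exact h.elim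
    | e4 φ h => exact thmE4 n φ
    | e5 φ h => exact thmE5 n φ
    | pnb φ h => exact h.elim
    | nnb φ h => exact h.elim
  | hyp h => exact absurd h (Set.notMem_empty _)
  | tnd φ _ => exact Deriv.tnd φ True.intro
  | an ha =>
    cases ha with
    | int h => exact Deriv.an (IsAxiom.int h)
    | a1 φ ψ => exact Deriv.an (IsAxiom.a1 φ ψ)
    | a2 φ => exact Deriv.an (IsAxiom.a2 φ)
    | a3 φ ψ => exact Deriv.an (IsAxiom.a3 φ ψ)
    | a4 φ h => exact Deriv.an (IsAxiom.a4 φ h)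
    | a5 φ h => exact Deriv.an (IsAxiom.a5 φ h)
    | kbel φ ψ h => exact Deriv.an (IsAxiom.kbel φ ψ True.intro)
    | core φ h => exact Deriv.an (IsAxiom.core φ True.intro)
    | intre φ h => exact h.elim
    | e4 φ h => exact boxE4 n φ
    | e5 φ h => exact boxE5 n φ
    | pnb φ h => exact h.elim
    | nnb φ h => exact h.elim
  | mp _ _ ih1 ih2 => exact Deriv.mp ih1 ih2

end Stmt0Aux

/-- For every n ∈ {3,4,5}, every theorem of `E5Ln⁻` is a theorem of
`E6Ln⁻`; in particular, `□(Kφ→KKφ)` and `□(¬Kφ→K¬Kφ)` are theorems of `E6Ln⁻`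
for every formula `φ`. -/
theorem stmt0 (n : Nat) (hn : n ∈ ({3, 4, 5} : Set Nat)) :
    (∀ φ : Fm, Thm (E5LmSpec n) φ → Thm (E6LmSpec n) φ) ∧
    (∀ φ : Fm,
      Thm (E6LmSpec n) (Fm.box ((Fm.k φ).imp (Fm.k (Fm.k φ)))) ∧
      Thm (E6LmSpec n) (Fm.box ((Fm.neg (Fm.k φ)).imp (Fm.k (Fm.neg (Fm.k φ)))))) :=
  ⟨fun _ h => lift56 h, fun φ => ⟨boxE4 n φ, boxE5 n φ⟩⟩
end

section
/- Let 𝓛 be one of the logics of the hierarchy containing axiom scheme (A4). If φ is a theorem of 𝓛 that has a derivation in which no instance of the theorem scheme (TND) occurs, then □φ is a theorem of 𝓛. -/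
/-- Let `𝓛` be a logic of the hierarchy containing axiom scheme
(A4).  If `φ` is a theorem of `𝓛` having a derivation in which no instance of
the theorem scheme (TND) occurs, then `□φ` is a theorem of `𝓛`. -/
theorem stmt1 (S : LogicSpec) (hS : InHierarchy S) (hA4 : S.hasA4)
    (φ : Fm) (h : Deriv (IsAxiom S) False ∅ φ) :
    Thm S (Fm.box φ) := by
  induction h with
  | ax hax => exact Deriv.an hax
  | hyp hmem => exact absurd hmem (by simp)
  | tnd _ ht => exact ht.elim
  | an hax => exact Deriv.mp (Deriv.ax (IsAxiom.a4 _ hA4)) (Deriv.an hax)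
  | mp _ _ ih1 ih2 =>
      exact Deriv.mp (Deriv.mp (Deriv.ax (IsAxiom.a2 _))
        (Deriv.mp (Deriv.ax (IsAxiom.a3 _ _)) ih1)) ih2
end

section
/- Let 𝓛 be a logic of the hierarchy containing (A4). The system obtained from 𝓛 by replacing axiom scheme (A3) with the distribution law □(φ→ψ)→(□φ→□ψ) and replacing (CoRe) □φ→□Kφ with the weaker scheme □φ→Kφ proves exactly the same theorems as 𝓛 (the two systems are deductively equivalent). -/
/-- The axioms of the variant system: as `IsAxiom S`, but with (A3) replaced by
the usual distribution law `□(φ→ψ)→(□φ→□ψ)` and (CoRe) replaced by the weaker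
scheme `□φ→Kφ`. -/
inductive IsAxiomVar (S : LogicSpec) : Fm → Prop
  | int {φ : Fm} : IPCThm φ → IsAxiomVar S φ
  | a1 (φ ψ : Fm) : IsAxiomVar S ((Fm.box (φ.or ψ)).imp ((Fm.box φ).or (Fm.box ψ)))
  | a2 (φ : Fm) : IsAxiomVar S ((Fm.box φ).imp φ)
  | dist (φ ψ : Fm) : IsAxiomVar S ((Fm.box (φ.imp ψ)).imp ((Fm.box φ).imp (Fm.box ψ)))
  | a4 (φ : Fm) : S.hasA4 → IsAxiomVar S ((Fm.box φ).imp (Fm.box (Fm.box φ)))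
  | a5 (φ : Fm) : S.hasA5 → IsAxiomVar S ((Fm.neg (Fm.box φ)).imp (Fm.box (Fm.neg (Fm.box φ))))
  | kbel (φ ψ : Fm) : S.hasKBel → IsAxiomVar S ((Fm.k (φ.imp ψ)).imp ((Fm.k φ).imp (Fm.k ψ)))
  | core (φ : Fm) : S.hasCoRe → IsAxiomVar S ((Fm.box φ).imp (Fm.k φ))
  | intre (φ : Fm) : S.hasIntRe → IsAxiomVar S ((Fm.k φ).imp (Fm.neg (Fm.neg φ)))
  | e4 (φ : Fm) : S.hasE4 → IsAxiomVar S ((Fm.k φ).imp (Fm.k (Fm.k φ)))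
  | e5 (φ : Fm) : S.hasE5 → IsAxiomVar S ((Fm.neg (Fm.k φ)).imp (Fm.k (Fm.neg (Fm.k φ))))
  | pnb (φ : Fm) : S.hasPNB → IsAxiomVar S ((Fm.k φ).imp (Fm.box (Fm.k φ)))
  | nnb (φ : Fm) : S.hasNNB → IsAxiomVar S ((Fm.neg (Fm.k φ)).imp (Fm.box (Fm.neg (Fm.k φ))))

section Helpers

variable {Ax : Fm → Prop} {t : Prop} {Φ : Set Fm}

/-- Syllogism (composition of implications), derived from K and S axioms. -/
theorem Deriv.syl (hint : ∀ χ, IPCThm χ → Ax χ) {a b c : Fm}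
    (h1 : Deriv Ax t Φ (a.imp b)) (h2 : Deriv Ax t Φ (b.imp c)) :
    Deriv Ax t Φ (a.imp c) :=
  Deriv.mp
    (Deriv.mp (Deriv.ax (hint _ (IPCThm.ax (IPCAx.k2 a b c))))
      (Deriv.mp (Deriv.ax (hint _ (IPCThm.ax (IPCAx.k1 (b.imp c) a)))) h2))
    h1

/-- Monotonicity in the `tnd` flag. -/
theorem Deriv.ofFalse {φ : Fm} (h : Deriv Ax False Φ φ) : Deriv Ax t Φ φ := by
  induction h with
  | ax h => exact .ax h
  | hyp h => exact .hyp h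
  | tnd _ h => exact absurd h not_false
  | an h => exact .an h
  | mp _ _ ih1 ih2 => exact .mp ih1 ih2

end Helpers

/-- The distribution law is derivable in the original systems. -/
theorem distS {S : LogicSpec} {t : Prop} {Φ : Set Fm} (φ ψ : Fm) :
    Deriv (IsAxiom S) t Φ ((Fm.box (φ.imp ψ)).imp ((Fm.box φ).imp (Fm.box ψ))) :=
  Deriv.syl (fun _ h => IsAxiom.int h) (.ax (IsAxiom.a3 φ ψ))
    (.ax (IsAxiom.a2 ((Fm.box φ).imp (Fm.box ψ))))

/-- Boxing of tnd-free theorems in the original system (needs A4). -/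
theorem boxS {S : LogicSpec} (hA4 : S.hasA4) {φ : Fm}
    (h : Deriv (IsAxiom S) False ∅ φ) : Deriv (IsAxiom S) False ∅ (Fm.box φ) := by
  induction h with
  | ax h => exact .an h
  | hyp h => exact absurd h (Set.notMem_empty _)
  | tnd _ h => exact absurd h not_false
  | @an χ h => exact .mp (.ax (IsAxiom.a4 χ hA4)) (.an h)
  | @mp a b _ _ ih1 ih2 => exact .mp (.mp (distS a b) ih1) ih2

/-- Boxing of tnd-free theorems in the variant system (needs A4). -/
theorem boxV {S : LogicSpec} (hA4 : S.hasA4) {φ : Fm}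
    (h : Deriv (IsAxiomVar S) False ∅ φ) : Deriv (IsAxiomVar S) False ∅ (Fm.box φ) := by
  induction h with
  | ax h => exact .an h
  | hyp h => exact absurd h (Set.notMem_empty _)
  | tnd _ h => exact absurd h not_false
  | @an χ h => exact .mp (.ax (IsAxiomVar.a4 χ hA4)) (.an h)
  | @mp a b _ _ ih1 ih2 => exact .mp (.mp (.ax (IsAxiomVar.dist a b)) ih1) ih2

/-- Every axiom of `S` is a (tnd-free) theorem of the variant system. -/
theorem axTransV {S : LogicSpec} (hA4 : S.hasA4) {φ : Fm} (h : IsAxiom S φ) :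
    Deriv (IsAxiomVar S) False ∅ φ := by
  have hint : ∀ χ, IPCThm χ → IsAxiomVar S χ := fun _ h => IsAxiomVar.int h
  cases h with
  | int h => exact .ax (.int h)
  | a1 φ ψ => exact .ax (.a1 φ ψ)
  | a2 φ => exact .ax (.a2 φ)
  | a3 φ ψ =>
      -- □(φ→ψ) → □□(φ→ψ) → □(□φ→□ψ)
      have d1 : Deriv (IsAxiomVar S) False ∅
          (Fm.box ((Fm.box (φ.imp ψ)).imp ((Fm.box φ).imp (Fm.box ψ)))) :=
        .an (IsAxiomVar.dist φ ψ)
      have d2 : Deriv (IsAxiomVar S) False ∅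
          ((Fm.box (Fm.box (φ.imp ψ))).imp (Fm.box ((Fm.box φ).imp (Fm.box ψ)))) :=
        .mp (.ax (IsAxiomVar.dist (Fm.box (φ.imp ψ)) ((Fm.box φ).imp (Fm.box ψ)))) d1
      exact Deriv.syl hint (.ax (IsAxiomVar.a4 (φ.imp ψ) hA4)) d2
  | a4 φ h => exact .ax (.a4 φ h)
  | a5 φ h => exact .ax (.a5 φ h)
  | kbel φ ψ h => exact .ax (.kbel φ ψ h)
  | core φ h =>
      have d1 : Deriv (IsAxiomVar S) False ∅ (Fm.box ((Fm.box φ).imp (Fm.k φ))) :=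
        .an (IsAxiomVar.core φ h)
      have d2 : Deriv (IsAxiomVar S) False ∅
          ((Fm.box (Fm.box φ)).imp (Fm.box (Fm.k φ))) :=
        .mp (.ax (IsAxiomVar.dist (Fm.box φ) (Fm.k φ))) d1
      exact Deriv.syl hint (.ax (IsAxiomVar.a4 φ hA4)) d2
  | intre φ h => exact .ax (.intre φ h)
  | e4 φ h => exact .ax (.e4 φ h)
  | e5 φ h => exact .ax (.e5 φ h)
  | pnb φ h => exact .ax (.pnb φ h)
  | nnb φ h => exact .ax (.nnb φ h)

/-- Every axiom of the variant system is a (tnd-free) theorem of `S`. -/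
theorem axTransS {S : LogicSpec} {φ : Fm} (h : IsAxiomVar S φ) :
    Deriv (IsAxiom S) False ∅ φ := by
  have hint : ∀ χ, IPCThm χ → IsAxiom S χ := fun _ h => IsAxiom.int h
  cases h with
  | int h => exact .ax (.int h)
  | a1 φ ψ => exact .ax (.a1 φ ψ)
  | a2 φ => exact .ax (.a2 φ)
  | dist φ ψ => exact distS φ ψ
  | a4 φ h => exact .ax (.a4 φ h)
  | a5 φ h => exact .ax (.a5 φ h)
  | kbel φ ψ h => exact .ax (.kbel φ ψ h)
  | core φ h =>
      exact Deriv.syl hint (.ax (IsAxiom.core φ h)) (.ax (IsAxiom.a2 (Fm.k φ)))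
  | intre φ h => exact .ax (.intre φ h)
  | e4 φ h => exact .ax (.e4 φ h)
  | e5 φ h => exact .ax (.e5 φ h)
  | pnb φ h => exact .ax (.pnb φ h)
  | nnb φ h => exact .ax (.nnb φ h)

/-- Let `𝓛` be a logic of the hierarchy containing (A4).
Replacing (A3) by the distribution law and (CoRe) by `□φ→Kφ` yields a
deductively equivalent system: it proves exactly the same theorems. -/
theorem stmt2 (S : LogicSpec) (hS : InHierarchy S) (hA4 : S.hasA4) (φ : Fm) :
    Thm S φ ↔ Deriv (IsAxiomVar S) True ∅ φ := by
  constructor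
  · intro h
    induction h with
    | ax h => exact (axTransV hA4 h).ofFalse
    | hyp h => exact absurd h (Set.notMem_empty _)
    | tnd χ _ => exact .tnd χ trivial
    | an h => exact (boxV hA4 (axTransV hA4 h)).ofFalse
    | mp _ _ ih1 ih2 => exact .mp ih1 ih2
  · intro h
    induction h with
    | ax h => exact (axTransS h).ofFalse
    | hyp h => exact absurd h (Set.notMem_empty _)
    | tnd χ _ => exact .tnd χ trivial
    | an h => exact (boxS hA4 (axTransS h)).ofFalse
    | mp _ _ ih1 ih2 => exact .mp ih1 ih2
end

section
/- For every formula φ, the formulas ◇□φ→□□φ, ◇¬□φ→□¬□φ and □(□φ∨¬□φ) are theorems of L5. -/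
namespace Stmt5Aux

open Fm

abbrev D (Φ : Set Fm) (φ : Fm) : Prop := Deriv (IsAxiom (Lspec 5)) True Φ φ

lemma iI (φ : Fm) : IPCThm (φ.imp φ) :=
  .mp (.mp (.ax (.k2 φ (φ.imp φ) φ)) (.ax (.k1 φ (φ.imp φ)))) (.ax (.k1 φ φ))

lemma icomp {φ ψ χ : Fm} (hg : IPCThm (ψ.imp χ)) (hf : IPCThm (φ.imp ψ)) :
    IPCThm (φ.imp χ) :=
  .mp (.mp (.ax (.k2 φ ψ χ)) (.mp (.ax (.k1 (ψ.imp χ) φ)) hg)) hf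

/-- `φ → ((φ→ψ)→ψ)`. -/
lemma iT (φ ψ : Fm) : IPCThm (φ.imp ((φ.imp ψ).imp ψ)) :=
  icomp (.mp (.ax (.k2 (φ.imp ψ) φ ψ)) (iI (φ.imp ψ))) (.ax (.k1 φ (φ.imp ψ)))

lemma dint {Φ : Set Fm} {φ : Fm} (h : IPCThm φ) : D Φ φ := .ax (.int h)

lemma dk1 (Φ : Set Fm) (φ ψ : Fm) : D Φ (φ.imp (ψ.imp φ)) := dint (.ax (.k1 φ ψ))

lemma dk2 (Φ : Set Fm) (φ ψ χ : Fm) :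
    D Φ ((φ.imp (ψ.imp χ)).imp ((φ.imp ψ).imp (φ.imp χ))) := dint (.ax (.k2 φ ψ χ))

lemma dI (Φ : Set Fm) (φ : Fm) : D Φ (φ.imp φ) := dint (iI φ)

lemma dcomp {Φ : Set Fm} {φ ψ χ : Fm} (hg : D Φ (ψ.imp χ)) (hf : D Φ (φ.imp ψ)) :
    D Φ (φ.imp χ) :=
  .mp (.mp (dk2 Φ φ ψ χ) (.mp (dk1 Φ (ψ.imp χ) φ) hg)) hf

lemma dEfq (Φ : Set Fm) (φ : Fm) : D Φ (Fm.bot.imp φ) := dint (.ax (.efq φ))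

/-- Deduction theorem. -/
lemma ded {Φ : Set Fm} {ψ φ : Fm} (h : D (insert ψ Φ) φ) : D Φ (ψ.imp φ) := by
  induction h with
  | ax h => exact .mp (dk1 _ _ _) (.ax h)
  | hyp h =>
      rcases Set.mem_insert_iff.mp h with rfl | h
      · exact dI _ _
      · exact .mp (dk1 _ _ _) (.hyp h)
  | tnd χ h => exact .mp (dk1 _ _ _) (.tnd χ h)
  | an h => exact .mp (dk1 _ _ _) (.an h)
  | mp _ _ ih1 ih2 => exact .mp (.mp (dk2 _ _ _ _) ih1) ih2

lemma h4 : (Lspec 5).hasA4 := Nat.le_succ 4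
lemma h5 : (Lspec 5).hasA5 := Nat.le_refl 5

end Stmt5Aux

open Stmt5Aux

/-- For every formula `φ`, the formulas `◇□φ→□□φ`, `◇¬□φ→□¬□φ` and
`□(□φ∨¬□φ)` are theorems of `L5`. -/


theorem stmt5 (φ : Fm) :
    Thm (Lspec 5) ((Fm.diam (Fm.box φ)).imp (Fm.box (Fm.box φ))) ∧
    Thm (Lspec 5) ((Fm.diam (Fm.neg (Fm.box φ))).imp (Fm.box (Fm.neg (Fm.box φ)))) ∧
    Thm (Lspec 5) (Fm.box ((Fm.box φ).or (Fm.neg (Fm.box φ)))) := by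

  refine ⟨?_, ?_, ?_⟩
  · -- ◇□φ → □□φ
    have branch1 : D ∅ ((Fm.box φ).imp ((Fm.diam (Fm.box φ)).imp (Fm.box (Fm.box φ)))) :=
      dcomp (dk1 _ _ _) (.ax (.a4 φ h4))
    have branch2 : D ∅ ((Fm.neg (Fm.box φ)).imp
        ((Fm.diam (Fm.box φ)).imp (Fm.box (Fm.box φ)))) := by
      refine ded (ded ?_)
      have hnb : D (insert (Fm.diam (Fm.box φ)) (insert (Fm.neg (Fm.box φ)) ∅))
          (Fm.neg (Fm.box φ)) := .hyp (Set.mem_insert_of_mem _ (Set.mem_insert _ _))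
      have hbox : D (insert (Fm.diam (Fm.box φ)) (insert (Fm.neg (Fm.box φ)) ∅))
          (Fm.box (Fm.neg (Fm.box φ))) := .mp (.ax (.a5 φ h5)) hnb
      have hd : D (insert (Fm.diam (Fm.box φ)) (insert (Fm.neg (Fm.box φ)) ∅))
          (Fm.diam (Fm.box φ)) := .hyp (Set.mem_insert _ _)
      exact .mp (dEfq _ _) (.mp hd hbox)
    exact .mp (.mp (.mp (dint (.ax (.orE (Fm.box φ) (Fm.neg (Fm.box φ)) _))) branch1)
      branch2) (.tnd (Fm.box φ) trivial)
  · -- ◇¬□φ → □¬□φ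
    have branch2 : D ∅ ((Fm.neg (Fm.box φ)).imp
        ((Fm.diam (Fm.neg (Fm.box φ))).imp (Fm.box (Fm.neg (Fm.box φ))))) :=
      dcomp (dk1 _ _ _) (.ax (.a5 φ h5))
    have branch1 : D ∅ ((Fm.box φ).imp
        ((Fm.diam (Fm.neg (Fm.box φ))).imp (Fm.box (Fm.neg (Fm.box φ))))) := by
      refine ded (ded ?_)
      set Γ : Set Fm := insert (Fm.diam (Fm.neg (Fm.box φ))) (insert (Fm.box φ) ∅) with hΓ
      have hb : D Γ (Fm.box φ) := .hyp (Set.mem_insert_of_mem _ (Set.mem_insert _ _))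
      have hbb : D Γ (Fm.box (Fm.box φ)) := .mp (.ax (.a4 φ h4)) hb
      have han : D Γ (Fm.box ((Fm.box φ).imp (Fm.neg (Fm.neg (Fm.box φ))))) :=
        .an (.int (iT (Fm.box φ) Fm.bot))
      have ha3 : D Γ (Fm.box ((Fm.box (Fm.box φ)).imp
          (Fm.box (Fm.neg (Fm.neg (Fm.box φ)))))) :=
        .mp (.ax (.a3 (Fm.box φ) (Fm.neg (Fm.neg (Fm.box φ))))) han
      have himp : D Γ ((Fm.box (Fm.box φ)).imp (Fm.box (Fm.neg (Fm.neg (Fm.box φ))))) :=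
        .mp (.ax (.a2 _)) ha3
      have hres : D Γ (Fm.box (Fm.neg (Fm.neg (Fm.box φ)))) := .mp himp hbb
      have hd : D Γ (Fm.diam (Fm.neg (Fm.box φ))) := .hyp (Set.mem_insert _ _)
      exact .mp (dEfq _ _) (.mp hd hres)
    exact .mp (.mp (.mp (dint (.ax (.orE (Fm.box φ) (Fm.neg (Fm.box φ)) _))) branch1)
      branch2) (.tnd (Fm.box φ) trivial)
  · -- □(□φ ∨ ¬□φ)
    set τ : Fm := (Fm.box φ).or (Fm.neg (Fm.box φ)) with hτ
    have branch1 : D ∅ ((Fm.box φ).imp (Fm.box τ)) := by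
      refine ded ?_
      set Γ : Set Fm := insert (Fm.box φ) ∅
      have hbb : D Γ (Fm.box (Fm.box φ)) := .mp (.ax (.a4 φ h4)) (.hyp (Set.mem_insert _ _))
      have han : D Γ (Fm.box ((Fm.box φ).imp τ)) :=
        .an (.int (.ax (.orI1 (Fm.box φ) (Fm.neg (Fm.box φ)))))
      have himp : D Γ ((Fm.box (Fm.box φ)).imp (Fm.box τ)) :=
        .mp (.ax (.a2 _)) (.mp (.ax (.a3 (Fm.box φ) τ)) han)
      exact .mp himp hbb
    have branch2 : D ∅ ((Fm.neg (Fm.box φ)).imp (Fm.box τ)) := by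
      refine ded ?_
      set Γ : Set Fm := insert (Fm.neg (Fm.box φ)) ∅
      have hbb : D Γ (Fm.box (Fm.neg (Fm.box φ))) :=
        .mp (.ax (.a5 φ h5)) (.hyp (Set.mem_insert _ _))
      have han : D Γ (Fm.box ((Fm.neg (Fm.box φ)).imp τ)) :=
        .an (.int (.ax (.orI2 (Fm.box φ) (Fm.neg (Fm.box φ)))))
      have himp : D Γ ((Fm.box (Fm.neg (Fm.box φ))).imp (Fm.box τ)) :=
        .mp (.ax (.a2 _)) (.mp (.ax (.a3 (Fm.neg (Fm.box φ)) τ)) han)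
      exact .mp himp hbb
    exact .mp (.mp (.mp (dint (.ax (.orE (Fm.box φ) (Fm.neg (Fm.box φ)) _))) branch1)
      branch2) (.tnd (Fm.box φ) trivial)
end

section
/- For every formula φ, the formulas □φ→□K□φ are theorems of EL4⁻, and the formulas ¬□φ→□K¬□φ and K□φ ∨ K¬□φ are theorems of EL5⁻. -/
section Aux

variable {Ax : Fm → Prop} {tnd : Prop} {Φ : Set Fm}

/-- IPC axioms are available in any logic. -/
lemma derivIPC {S : LogicSpec} {Φ : Set Fm} {φ : Fm} (h : IPCAx φ) :
    Deriv (IsAxiom S) True Φ φ :=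
  Deriv.ax (IsAxiom.int (IPCThm.ax h))

/-- Transitivity of implication at the derivation level. -/
lemma derivTrans {S : LogicSpec} {Φ : Set Fm} {φ ψ χ : Fm}
    (h1 : Deriv (IsAxiom S) True Φ (φ.imp ψ))
    (h2 : Deriv (IsAxiom S) True Φ (ψ.imp χ)) :
    Deriv (IsAxiom S) True Φ (φ.imp χ) := by
  have s1 : Deriv (IsAxiom S) True Φ (φ.imp (ψ.imp χ)) :=
    Deriv.mp (derivIPC (IPCAx.k1 (ψ.imp χ) φ)) h2
  have s2 : Deriv (IsAxiom S) True Φ ((φ.imp ψ).imp (φ.imp χ)) :=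
    Deriv.mp (derivIPC (IPCAx.k2 φ ψ χ)) s1
  exact Deriv.mp s2 h1

end Aux

/-- For every formula `φ`, `□φ→□K□φ` is a theorem of `EL4⁻`, and
`¬□φ→□K¬□φ` and `K□φ ∨ K¬□φ` are theorems of `EL5⁻`. -/
theorem stmt6 (φ : Fm) :
    Thm (ELmSpec 4) ((Fm.box φ).imp (Fm.box (Fm.k (Fm.box φ)))) ∧
    Thm (ELmSpec 5) ((Fm.neg (Fm.box φ)).imp (Fm.box (Fm.k (Fm.neg (Fm.box φ))))) ∧
    Thm (ELmSpec 5) ((Fm.k (Fm.box φ)).or (Fm.k (Fm.neg (Fm.box φ)))) := by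
  have h1 : Thm (ELmSpec 4) ((Fm.box φ).imp (Fm.box (Fm.k (Fm.box φ)))) :=
    derivTrans (Deriv.ax (IsAxiom.a4 φ (by norm_num [ELmSpec])))
      (Deriv.ax (IsAxiom.core (Fm.box φ) trivial))
  have h1' : Thm (ELmSpec 5) ((Fm.box φ).imp (Fm.box (Fm.k (Fm.box φ)))) :=
    derivTrans (Deriv.ax (IsAxiom.a4 φ (by norm_num [ELmSpec])))
      (Deriv.ax (IsAxiom.core (Fm.box φ) trivial))
  have h2 : Thm (ELmSpec 5) ((Fm.neg (Fm.box φ)).imp (Fm.box (Fm.k (Fm.neg (Fm.box φ))))) :=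
    derivTrans (Deriv.ax (IsAxiom.a5 φ (by norm_num [ELmSpec])))
      (Deriv.ax (IsAxiom.core (Fm.neg (Fm.box φ)) trivial))
  refine ⟨h1, h2, ?_⟩
  -- □φ → K□φ
  have p1 : Thm (ELmSpec 5) ((Fm.box φ).imp (Fm.k (Fm.box φ))) :=
    derivTrans h1' (Deriv.ax (IsAxiom.a2 (Fm.k (Fm.box φ))))
  have p2 : Thm (ELmSpec 5) ((Fm.neg (Fm.box φ)).imp (Fm.k (Fm.neg (Fm.box φ)))) :=
    derivTrans h2 (Deriv.ax (IsAxiom.a2 (Fm.k (Fm.neg (Fm.box φ)))))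
  have q1 : Thm (ELmSpec 5)
      ((Fm.box φ).imp ((Fm.k (Fm.box φ)).or (Fm.k (Fm.neg (Fm.box φ))))) :=
    derivTrans p1 (derivIPC (IPCAx.orI1 _ _))
  have q2 : Thm (ELmSpec 5)
      ((Fm.neg (Fm.box φ)).imp ((Fm.k (Fm.box φ)).or (Fm.k (Fm.neg (Fm.box φ))))) :=
    derivTrans p2 (derivIPC (IPCAx.orI2 _ _))
  have orE := derivIPC (S := ELmSpec 5) (Φ := (∅ : Set Fm))
    (IPCAx.orE (Fm.box φ) (Fm.neg (Fm.box φ))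
      ((Fm.k (Fm.box φ)).or (Fm.k (Fm.neg (Fm.box φ)))))
  exact Deriv.mp (Deriv.mp (Deriv.mp orE q1) q2) (Deriv.tnd (Fm.box φ) trivial)
end

section
/- Let H be a Heyting algebra, let m₁, m₂ ∈ H, and let P be a prime filter of H. Then the Heyting implication m₁ ⇨ m₂ belongs to P if and only if for every prime filter P' of H with P ⊆ P', m₁ ∈ P' implies m₂ ∈ P'. -/
/-- A filter of a Heyting algebra: a nonempty, upward-closed subset closed under meets. -/
def IsHFilter {H : Type*} [HeytingAlgebra H] (F : Set H) : Prop :=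
  F.Nonempty ∧ (∀ ⦃a b : H⦄, a ∈ F → a ≤ b → b ∈ F) ∧
    (∀ ⦃a b : H⦄, a ∈ F → b ∈ F → a ⊓ b ∈ F)

/-- A proper filter: a filter which is not the whole algebra. -/
def IsProperHFilter {H : Type*} [HeytingAlgebra H] (F : Set H) : Prop :=
  IsHFilter F ∧ F ≠ Set.univ

/-- A prime filter: a proper filter such that `a ⊔ b ∈ F` implies `a ∈ F` or `b ∈ F`. -/
def IsPrimeHFilter {H : Type*} [HeytingAlgebra H] (F : Set H) : Prop :=
  IsProperHFilter F ∧ ∀ a b : H, a ⊔ b ∈ F → a ∈ F ∨ b ∈ F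

/-- An ultrafilter: a maximal proper filter. -/
def IsUltraHFilter {H : Type*} [HeytingAlgebra H] (F : Set H) : Prop :=
  IsProperHFilter F ∧ ∀ G : Set H, IsProperHFilter G → F ⊆ G → G = F

/-- The filter generated by a filter `G` and an element `a`. -/
def HFilterExt {H : Type*} [HeytingAlgebra H] (G : Set H) (a : H) : Set H :=
  {x | ∃ g ∈ G, g ⊓ a ≤ x}

lemma HFilterExt_isHFilter {H : Type*} [HeytingAlgebra H] {G : Set H} (hG : IsHFilter G)
    (a : H) : IsHFilter (HFilterExt G a) := by
  obtain ⟨⟨g, hg⟩, hup, hmeet⟩ := hG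
  refine ⟨⟨g ⊓ a, g, hg, le_rfl⟩, ?_, ?_⟩
  · rintro x y ⟨g₁, hg₁, hle⟩ hxy
    exact ⟨g₁, hg₁, hle.trans hxy⟩
  · rintro x y ⟨g₁, hg₁, h₁⟩ ⟨g₂, hg₂, h₂⟩
    exact ⟨g₁ ⊓ g₂, hmeet hg₁ hg₂, le_inf
      ((inf_le_inf_right a inf_le_left).trans h₁)
      ((inf_le_inf_right a inf_le_right).trans h₂)⟩

lemma HFilterExt_subset {H : Type*} [HeytingAlgebra H] {G : Set H} (_hG : IsHFilter G)
    (a : H) : G ⊆ HFilterExt G a := fun x hx => ⟨x, hx, inf_le_left⟩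

lemma HFilterExt_mem {H : Type*} [HeytingAlgebra H] {G : Set H} (hG : IsHFilter G)
    (a : H) : a ∈ HFilterExt G a := by
  obtain ⟨g, hg⟩ := hG.1
  exact ⟨g, hg, inf_le_right⟩

/-- Let `H` be a Heyting algebra, `m₁ m₂ ∈ H` and `P` a prime
filter of `H`.  Then `m₁ ⇨ m₂ ∈ P` iff for every prime filter `P' ⊇ P`,
`m₁ ∈ P'` implies `m₂ ∈ P'`. -/
theorem stmt8 {H : Type*} [HeytingAlgebra H] (m₁ m₂ : H) (P : Set H)
    (hP : IsPrimeHFilter P) :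
    (m₁ ⇨ m₂) ∈ P ↔
      ∀ P' : Set H, IsPrimeHFilter P' → P ⊆ P' → m₁ ∈ P' → m₂ ∈ P' := by
  obtain ⟨⟨hPf, hPproper⟩, hPprime⟩ := hP
  constructor
  · intro h P' hP' hsub hm₁
    obtain ⟨⟨⟨hne, hup, hmeet⟩, _⟩, _⟩ := hP'
    exact hup (hmeet (hsub h) hm₁) (by simp [himp_inf_le])
  · intro h
    by_contra hn
    -- base filter: generated by P and m₁
    set F₀ := HFilterExt P m₁ with hF₀def
    have hF₀ : IsHFilter F₀ := HFilterExt_isHFilter hPf m₁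
    have hm₂F₀ : m₂ ∉ F₀ := by
      rintro ⟨p, hp, hle⟩
      exact hn (hPf.2.1 hp (le_himp_iff.mpr hle))
    set S : Set (Set H) := {G | IsHFilter G ∧ F₀ ⊆ G ∧ m₂ ∉ G} with hSdef
    have hF₀S : F₀ ∈ S := ⟨hF₀, subset_rfl, hm₂F₀⟩
    have hub : ∀ c ⊆ S, IsChain (· ⊆ ·) c → c.Nonempty → ∃ ub ∈ S, ∀ s ∈ c, s ⊆ ub := by
      intro c hcS hchain hcne
      refine ⟨⋃₀ c, ⟨⟨?_, ?_, ?_⟩, ?_, ?_⟩, fun s hs => Set.subset_sUnion_of_mem hs⟩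
      · obtain ⟨G, hG⟩ := hcne
        obtain ⟨x, hx⟩ := (hcS hG).1.1
        exact ⟨x, G, hG, hx⟩
      · rintro x y ⟨G, hG, hx⟩ hxy
        exact ⟨G, hG, (hcS hG).1.2.1 hx hxy⟩
      · rintro x y ⟨G₁, hG₁, hx⟩ ⟨G₂, hG₂, hy⟩
        rcases hchain.total hG₁ hG₂ with hle | hle
        · exact ⟨G₂, hG₂, (hcS hG₂).1.2.2 (hle hx) hy⟩
        · exact ⟨G₁, hG₁, (hcS hG₁).1.2.2 hx (hle hy)⟩
      · obtain ⟨G, hG⟩ := hcne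
        exact ((hcS hG).2.1).trans (Set.subset_sUnion_of_mem hG)
      · rintro ⟨G, hG, hm⟩
        exact (hcS hG).2.2 hm
    obtain ⟨M, hF₀M, hMS, hMmax⟩ := zorn_subset_nonempty S hub F₀ hF₀S
    obtain ⟨hMf, hF₀M', hm₂M⟩ := hMS
    -- M is prime
    have hprime : ∀ a b : H, a ⊔ b ∈ M → a ∈ M ∨ b ∈ M := by
      intro a b hab
      by_contra hc
      push_neg at hc
      obtain ⟨ha, hb⟩ := hc
      have key : ∀ c : H, c ∉ M → m₂ ∈ HFilterExt M c := by
        intro c hc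
        by_contra hmc
        have : HFilterExt M c ∈ S :=
          ⟨HFilterExt_isHFilter hMf c, hF₀M'.trans (HFilterExt_subset hMf c), hmc⟩
        have := hMmax this (HFilterExt_subset hMf c)
        exact hc (this (HFilterExt_mem hMf c))
      obtain ⟨g₁, hg₁, h₁⟩ := key a ha
      obtain ⟨g₂, hg₂, h₂⟩ := key b hb
      have : (g₁ ⊓ g₂) ⊓ (a ⊔ b) ≤ m₂ := by
        rw [inf_sup_left]
        apply sup_le
        · exact le_trans (inf_le_inf_right a (inf_le_left)) h₁
        · exact le_trans (inf_le_inf_right b (inf_le_right)) h₂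
      exact hm₂M (hMf.2.1 (hMf.2.2 (hMf.2.2 hg₁ hg₂) hab) this)
    have hMproper : M ≠ Set.univ := fun hEq => hm₂M (hEq ▸ Set.mem_univ m₂)
    have hPM : P ⊆ M := (HFilterExt_subset hPf m₁).trans hF₀M
    have hm₁M : m₁ ∈ M := hF₀M (HFilterExt_mem hPf m₁)
    exact hm₂M (h M ⟨⟨hMf, hMproper⟩, hprime⟩ hPM hm₁M)
end

section
/- Let M be an EL3⁻-model (or any model of the hierarchy). Then the set BEL := {m ∈ M | f_K(m) ∈ TRUE} of believed propositions is a filter of the underlying Heyting algebra. If moreover M is a model of knowledge, i.e. f_K(m) ≤ ¬¬m for all m ∈ M, then BEL ⊆ TRUE and BEL is a proper filter. -/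
/-- The raw data of an algebraic model: a Heyting algebra together with a
designated set `TRUE` and unary operations `fbox` (for `□`) and `fK` (for `K`). -/
structure PreModel (M : Type*) [HeytingAlgebra M] where
  TRUE : Set M
  fbox : M → M
  fK : M → M

/-- An `EL3⁻`-model: `TRUE` is an ultrafilter and the truth conditions (i)–(vi) hold. -/
def IsEL3mModel {M : Type*} [HeytingAlgebra M] (S : PreModel M) : Prop :=
  IsUltraHFilter S.TRUE ∧
  (∀ m m' : M, S.fbox (m ⊔ m') ≤ S.fbox m ⊔ S.fbox m') ∧
  (∀ m : M, S.fbox m ≤ m) ∧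
  (∀ m m' : M, S.fbox (m ⇨ m') ≤ S.fbox (S.fbox m ⇨ S.fbox m')) ∧
  (∀ m : M, S.fbox m ∈ S.TRUE ↔ m = ⊤) ∧
  (∀ m m' : M, S.fK (m ⇨ m') ≤ S.fK m ⇨ S.fK m') ∧
  (∀ m : M, S.fbox m ≤ S.fbox (S.fK m))

/-- An `EL5⁻`-model: an `EL3⁻`-model where `fbox ⊤ = ⊤` and `fbox m = ⊥` for `m ≠ ⊤`. -/
def IsEL5mModel {M : Type*} [HeytingAlgebra M] (S : PreModel M) : Prop :=
  IsEL3mModel S ∧ S.fbox ⊤ = ⊤ ∧ ∀ m : M, m ≠ ⊤ → S.fbox m = ⊥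

/-- An `EL5`-model: an `EL5⁻`-model which additionally satisfies `fK m ≤ ¬¬m`. -/
def IsEL5Model {M : Type*} [HeytingAlgebra M] (S : PreModel M) : Prop :=
  IsEL5mModel S ∧ ∀ m : M, S.fK m ≤ (m ⇨ ⊥) ⇨ ⊥

/-- In any `EL3⁻`-model, the set `BEL = {m | f_K(m) ∈ TRUE}` of
believed propositions is a filter of the underlying Heyting algebra; if the
model is a model of knowledge (i.e. `f_K(m) ≤ ¬¬m` for all `m`), then
`BEL ⊆ TRUE` and `BEL` is a proper filter. -/
theorem stmt9 {M : Type*} [HeytingAlgebra M] (S : PreModel M) (h : IsEL3mModel S) :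
    IsHFilter {m : M | S.fK m ∈ S.TRUE} ∧
    ((∀ m : M, S.fK m ≤ (m ⇨ ⊥) ⇨ ⊥) →
      {m : M | S.fK m ∈ S.TRUE} ⊆ S.TRUE ∧
      IsProperHFilter {m : M | S.fK m ∈ S.TRUE}) := by

  obtain ⟨⟨⟨hTne, hTup, hTmeet⟩, hTproper⟩, hTmax⟩ := h.1
  obtain ⟨_, hii, hiii, hiv, hv, hvi⟩ := h.2
  -- K of any top element is in TRUE
  have hKtop : ∀ m : M, m = ⊤ → S.fK m ∈ S.TRUE := by
    intro m hm
    have h1 : S.fbox m ∈ S.TRUE := (hiv m).mpr hm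
    have h2 : S.fbox m ≤ S.fK m := le_trans (hvi m) (hii (S.fK m))
    exact hTup h1 h2
  -- modus ponens inside TRUE
  have hmp : ∀ a b : M, a ∈ S.TRUE → a ⇨ b ∈ S.TRUE → b ∈ S.TRUE := by
    intro a b ha hab
    exact hTup (hTmeet ha hab) (by simp [inf_himp_le])
  have hBup : ∀ ⦃a b : M⦄, S.fK a ∈ S.TRUE → a ≤ b → S.fK b ∈ S.TRUE := by
    intro a b ha hab
    have h1 : S.fK (a ⇨ b) ∈ S.TRUE := hKtop _ (by rwa [himp_eq_top_iff])
    exact hmp _ _ ha (hTup h1 (hv a b))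
  have hBfilter : IsHFilter {m : M | S.fK m ∈ S.TRUE} := by
    refine ⟨⟨⊤, hKtop ⊤ rfl⟩, hBup, ?_⟩
    intro a b ha hb
    have h1 : S.fK (a ⇨ (b ⇨ a ⊓ b)) ∈ S.TRUE := by
      apply hKtop
      rw [himp_eq_top_iff]
      exact le_himp_iff.mpr le_rfl
    have h2 : S.fK (b ⇨ a ⊓ b) ∈ S.TRUE :=
      hmp _ _ ha (hTup h1 (hv _ _))
    exact hmp _ _ hb (hTup h2 (hv _ _))
  refine ⟨hBfilter, ?_⟩
  intro hK
  have hbotT : (⊥ : M) ∉ S.TRUE := by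
    intro hbot
    exact hTproper (Set.eq_univ_iff_forall.mpr (fun x => hTup hbot bot_le))
  have hsub : {m : M | S.fK m ∈ S.TRUE} ⊆ S.TRUE := by
    intro m hm
    have hnn : ((m ⇨ ⊥) ⇨ ⊥) ∈ S.TRUE := hTup hm (hK m)
    by_contra hmT
    -- the filter generated by TRUE ∪ {m}
    set G : Set M := {x | ∃ t ∈ S.TRUE, t ⊓ m ≤ x} with hG
    by_cases hGproper : IsProperHFilter G
    · have hTG : S.TRUE ⊆ G := fun t ht => ⟨t, ht, inf_le_left⟩
      have := hTmax G hGproper hTG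
      have hmG : m ∈ G := by
        obtain ⟨t, ht⟩ := hTne
        exact ⟨t, ht, inf_le_right⟩
      rw [this] at hmG
      exact hmT hmG
    · -- G is a filter, so it must fail properness: ∃ t ∈ TRUE, t ⊓ m ≤ ⊥
      have hGfil : IsHFilter G := by
        refine ⟨⟨⊤, ?_⟩, ?_, ?_⟩
        · obtain ⟨t, ht⟩ := hTne; exact ⟨t, ht, le_top⟩
        · rintro a b ⟨t, ht, hta⟩ hab; exact ⟨t, ht, le_trans hta hab⟩
        · rintro a b ⟨t, ht, hta⟩ ⟨t', ht', htb⟩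
          refine ⟨t ⊓ t', hTmeet ht ht', le_inf ?_ ?_⟩
          · exact le_trans (inf_le_inf_right m inf_le_left) hta
          · exact le_trans (inf_le_inf_right m inf_le_right) htb
      have hGuniv : G = Set.univ := by
        by_contra hne
        exact hGproper ⟨hGfil, hne⟩
      have hbotG : (⊥ : M) ∈ G := by rw [hGuniv]; trivial
      obtain ⟨t, ht, htm⟩ := hbotG
      have hnm : (m ⇨ ⊥) ∈ S.TRUE := hTup ht (le_himp_iff.mpr htm)
      have : (⊥ : M) ∈ S.TRUE := hmp _ _ hnm hnn
      exact hbotT this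
  refine ⟨hsub, hBfilter, ?_⟩
  intro huniv
  exact hTproper (Set.eq_univ_of_univ_subset (huniv ▸ hsub))
end

section
/- Let M = (M, TRUE, f_⊥, f_⊤, f_∨, f_∧, f_→, f_□, f_K) be a Heyting algebra with an ultrafilter TRUE and additional unary operations f_□, f_K. Then M is an EL5⁻-model if and only if for all m, m' ∈ M: (a) M has the disjunction property (m ⊔ m' = ⊤ implies m = ⊤ or m' = ⊤); (b) f_□(m) = ⊤ if m = ⊤ and f_□(m) = ⊥ otherwise; (c) f_K(m ⇨ m') ≤ f_K(m) ⇨ f_K(m'); and (d) f_K(⊤) = ⊤. Moreover, M is an EL5-model if and only if in addition (e) f_K(m) ≤ ¬¬m holds for all m ∈ M. -/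
/-- Let `M` be a Heyting algebra with an ultrafilter `TRUE` and
operations `f_□`, `f_K`.  Then `M` is an `EL5⁻`-model iff (a) `M` has the
disjunction property, (b) `f_□(⊤)=⊤` and `f_□(m)=⊥` for `m ≠ ⊤`, (c)
`f_K(m⇨m') ≤ f_K(m)⇨f_K(m')` and (d) `f_K(⊤)=⊤`; and `M` is an `EL5`-model iff
additionally (e) `f_K(m) ≤ ¬¬m` for all `m`. -/
theorem stmt10 {M : Type*} [HeytingAlgebra M] (S : PreModel M)
    (hU : IsUltraHFilter S.TRUE) :
    (IsEL5mModel S ↔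
      ((∀ m m' : M, m ⊔ m' = ⊤ → m = ⊤ ∨ m' = ⊤) ∧
       (S.fbox ⊤ = ⊤ ∧ ∀ m : M, m ≠ ⊤ → S.fbox m = ⊥) ∧
       (∀ m m' : M, S.fK (m ⇨ m') ≤ S.fK m ⇨ S.fK m') ∧
       S.fK ⊤ = ⊤)) ∧
    (IsEL5Model S ↔
      ((∀ m m' : M, m ⊔ m' = ⊤ → m = ⊤ ∨ m' = ⊤) ∧
       (S.fbox ⊤ = ⊤ ∧ ∀ m : M, m ≠ ⊤ → S.fbox m = ⊥) ∧
       (∀ m m' : M, S.fK (m ⇨ m') ≤ S.fK m ⇨ S.fK m') ∧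
       S.fK ⊤ = ⊤ ∧
       (∀ m : M, S.fK m ≤ (m ⇨ ⊥) ⇨ ⊥))) := by
  have hU' := hU
  obtain ⟨⟨⟨⟨a0, ha0⟩, hup, -⟩, hne⟩, -⟩ := hU'
  have htop : (⊤ : M) ∈ S.TRUE := hup ha0 le_top
  have hbot : (⊥ : M) ∉ S.TRUE := fun hb =>
    hne (Set.eq_univ_of_forall fun x => hup hb bot_le)
  have key : IsEL5mModel S ↔
      ((∀ m m' : M, m ⊔ m' = ⊤ → m = ⊤ ∨ m' = ⊤) ∧
       (S.fbox ⊤ = ⊤ ∧ ∀ m : M, m ≠ ⊤ → S.fbox m = ⊥) ∧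
       (∀ m m' : M, S.fK (m ⇨ m') ≤ S.fK m ⇨ S.fK m') ∧
       S.fK ⊤ = ⊤) := by
    constructor
    · rintro ⟨⟨-, hi, -, -, hiv, hc, hvi⟩, ht, hf⟩
      refine ⟨?_, ⟨ht, hf⟩, hc, ?_⟩
      · intro m m' hmm
        by_contra h
        push_neg at h
        have h2 := hi m m'
        rw [hmm, ht, hf m h.1, hf m' h.2, sup_idem] at h2
        have hbt : (⊥ : M) = ⊤ := le_antisymm bot_le h2
        exact hbot (hbt ▸ htop)
      · exact (hiv _).1 (hup (show S.fbox ⊤ ∈ S.TRUE by rw [ht]; exact htop) (hvi ⊤))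
    · rintro ⟨hdp, ⟨ht, hf⟩, hc, hK⟩
      have hiv : ∀ m : M, S.fbox m ∈ S.TRUE ↔ m = ⊤ := by
        intro m
        constructor
        · intro h
          by_contra hm
          rw [hf m hm] at h
          exact hbot h
        · rintro rfl
          rw [ht]; exact htop
      refine ⟨⟨hU, ?_, ?_, ?_, hiv, hc, ?_⟩, ht, hf⟩
      · intro m m'
        by_cases h : m ⊔ m' = ⊤
        · rcases hdp m m' h with h1 | h1
          · rw [h, ht, h1, ht]; exact le_sup_left
          · rw [h, ht, h1, ht]; exact le_sup_right
        · rw [hf _ h]; exact bot_le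
      · intro m
        by_cases hm : m = ⊤
        · subst hm; rw [ht]
        · rw [hf m hm]; exact bot_le
      · intro m m'
        by_cases h : m ⇨ m' = ⊤
        · rw [h, ht]
          by_cases hm : m = ⊤
          · have hm' : m' = ⊤ := top_le_iff.1 (hm ▸ himp_eq_top_iff.1 h)
            rw [hm, hm', ht, himp_self, ht]
          · rw [hf m hm, bot_himp, ht]
        · rw [hf _ h]; exact bot_le
      · intro m
        by_cases hm : m = ⊤
        · subst hm; rw [hK]
        · rw [hf m hm]; exact bot_le
  refine ⟨key, ?_⟩
  constructor
  · rintro ⟨h5, he⟩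
    obtain ⟨a, b, c, d⟩ := key.1 h5
    exact ⟨a, b, c, d, he⟩
  · rintro ⟨a, b, c, d, e⟩
    exact ⟨key.2 ⟨a, b, c, d⟩, e⟩
end

section
/- Every E6L5⁻-frame is an E5L5⁻-frame; that is, if E is constant (E(w) = E(w_⊥) for all w ∈ W), then the frame satisfies both the E4L5⁻-condition (A ∈ E(w) implies KA ∈ E(w)) and the E5L5⁻-condition (if A ∉ E(w') for all w' ≥ w, then (KA ⊃ ∅) ∈ E(w)). -/
/-- The raw data of an intuitionistic general frame: worlds, an accessibility
relation, a set `P` of propositions, a belief function `E` and a bottom world. -/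
structure Frame (W : Type*) where
  R : W → W → Prop
  P : Set (Set W)
  E : W → Set (Set W)
  wbot : W

/-- The operation `A ⊃ B` on propositions. -/
def Frame.himp {W : Type*} (F : Frame W) (A B : Set W) : Set W :=
  {w | ∀ w', F.R w w' → w' ∈ A → w' ∈ B}

/-- The operation `KA = {w | A ∈ E(w)}` on propositions. -/
def Frame.kset {W : Type*} (F : Frame W) (A : Set W) : Set W :=
  {w | A ∈ F.E w}

/-- `w` is an `R`-maximal world. -/
def Frame.IsMaxW {W : Type*} (F : Frame W) (w : W) : Prop :=
  ∀ w', F.R w w' → w' = w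

/-- The basic frame conditions (of an `EL5⁻`-frame, except for the designated
maximal world): `R` is a partial order with least element `wbot` in which every
`R`-chain has an upper bound; `P` consists of upper sets, contains `∅` and `W`
and is closed under `∩`, `∪`, `⊃` and `K`; each `E(w)` is a filter on `P`; and
`E` is monotone. -/
def IsBaseFrame {W : Type*} (F : Frame W) : Prop :=
  (∀ w, F.R w w) ∧
  (∀ ⦃w w' w''⦄, F.R w w' → F.R w' w'' → F.R w w'') ∧
  (∀ ⦃w w'⦄, F.R w w' → F.R w' w → w = w') ∧
  (∀ w, F.R F.wbot w) ∧
  (∀ C : Set W, IsChain F.R C → ∃ ub, ∀ w ∈ C, F.R w ub) ∧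
  (∀ A ∈ F.P, ∀ ⦃w w'⦄, F.R w w' → w ∈ A → w' ∈ A) ∧
  (∅ : Set W) ∈ F.P ∧
  (Set.univ : Set W) ∈ F.P ∧
  (∀ A ∈ F.P, ∀ B ∈ F.P, A ∩ B ∈ F.P) ∧
  (∀ A ∈ F.P, ∀ B ∈ F.P, A ∪ B ∈ F.P) ∧
  (∀ A ∈ F.P, ∀ B ∈ F.P, F.himp A B ∈ F.P) ∧
  (∀ A ∈ F.P, F.kset A ∈ F.P) ∧
  (∀ w, F.E w ⊆ F.P) ∧
  (∀ w, (F.E w).Nonempty) ∧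
  (∀ w, ∀ A ∈ F.E w, ∀ B ∈ F.E w, A ∩ B ∈ F.E w) ∧
  (∀ w, ∀ A ∈ F.E w, ∀ B ∈ F.P, A ⊆ B → B ∈ F.E w) ∧
  (∀ ⦃w w'⦄, F.R w w' → F.E w ⊆ F.E w')

/-- The `E4L5⁻`-frame condition: `A ∈ E(w)` implies `KA ∈ E(w)`. -/
def E4Cond {W : Type*} (F : Frame W) : Prop :=
  ∀ w, ∀ A ∈ F.P, A ∈ F.E w → F.kset A ∈ F.E w

/-- The `E5L5⁻`-frame condition: if `A ∉ E(w')` for all `w' ≥ w`,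
then `(KA ⊃ ∅) ∈ E(w)`. -/
def E5Cond {W : Type*} (F : Frame W) : Prop :=
  ∀ w, ∀ A ∈ F.P, (∀ w', F.R w w' → A ∉ F.E w') → F.himp (F.kset A) ∅ ∈ F.E w

/-- The `E6L5⁻`-frame condition: `E` is constant, i.e. `E(w) = E(wbot)` for all `w`. -/
def E6Cond {W : Type*} (F : Frame W) : Prop :=
  ∀ w, F.E w = F.E F.wbot

/-- The knowledge condition of `EkL5`-frames: every believed proposition
contains all accessible maximal worlds. -/
def KnowCond {W : Type*} (F : Frame W) : Prop :=
  ∀ w, ∀ A ∈ F.E w, ∀ w', F.R w w' → F.IsMaxW w' → w' ∈ A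

/-- The condition (IntCo) of intuitionistic co-reflection: `w ∈ A` implies `A ∈ E(w)`. -/
def IntCoCond {W : Type*} (F : Frame W) : Prop :=
  ∀ w, ∀ A ∈ F.P, w ∈ A → A ∈ F.E w

/-- An `IEL⁻`-frame: the basic frame conditions (no designated maximal world)
together with (IntCo). -/
def IsIELmFrame {W : Type*} (F : Frame W) : Prop := IsBaseFrame F ∧ IntCoCond F

/-- An `IEL`-frame: an `IEL⁻`-frame in which every believed proposition contains
all accessible maximal worlds. -/
def IsIELFrame {W : Type*} (F : Frame W) : Prop := IsIELmFrame F ∧ KnowCond F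

/-- A frame with a designated world `wT`. -/
structure EFrame (W : Type*) extends Frame W where
  wT : W

/-- An `EL5⁻`-frame: the basic frame conditions together with maximality of the
designated world `wT`. -/
def IsEL5mFrame {W : Type*} (F : EFrame W) : Prop :=
  IsBaseFrame F.toFrame ∧ F.toFrame.IsMaxW F.wT

/-- Every `E6L5⁻`-frame is an `E5L5⁻`-frame: if `E` is constant
(`E(w) = E(w_⊥)` for all `w`), then the frame satisfies both the
`E4L5⁻`-condition and the `E5L5⁻`-condition. -/
theorem stmt13 {W : Type*} (F : EFrame W) (hF : IsEL5mFrame F)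
    (h6 : E6Cond F.toFrame) :
    E4Cond F.toFrame ∧ E5Cond F.toFrame := by
  obtain ⟨hB, hmax⟩ := hF
  obtain ⟨hrefl, htrans, hanti, hbot, hchain, hup, hemp, huniv, hint, hun, himp, hk,
    hEP, hEne, hEint, hEup, hEmono⟩ := hB
  have hunivE : ∀ w, (Set.univ : Set W) ∈ F.toFrame.E w := by
    intro w
    obtain ⟨B, hBmem⟩ := hEne w
    exact hEup w B hBmem Set.univ huniv (Set.subset_univ B)
  constructor
  · intro w A hAP hA
    have : F.toFrame.kset A = Set.univ := by
      ext v
      simp only [Frame.kset, Set.mem_setOf_eq, Set.mem_univ, iff_true]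
      rw [h6 v]; rw [h6 w] at hA; exact hA
    rw [this]; exact hunivE w
  · intro w A hAP hnot
    have hK : F.toFrame.kset A = ∅ := by
      ext v
      simp only [Frame.kset, Set.mem_setOf_eq, Set.mem_empty_iff_false, iff_false]
      intro hv
      exact hnot w (hrefl w) (by rw [h6 w]; rw [h6 v] at hv; exact hv)
    have : F.toFrame.himp (F.toFrame.kset A) ∅ = Set.univ := by
      ext v
      simp only [Frame.himp, hK, Set.mem_setOf_eq, Set.mem_univ, iff_true]
      intro w' _ h; exact h.elim
    rw [this]; exact hunivE w
end

section
/- Soundness with respect to relational semantics: let 𝓛 be one of the logics EL5⁻, EL5, EkL5⁻ or EkL5 (k ∈ {4,5,6}). For every set of formulas Φ ∪ {φ} ⊆ Fm, if Φ ⊢_𝓛 φ, then every relational model based on an 𝓛-frame satisfying Φ also satisfies φ. -/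
/-- Interpretation of formulas in a frame under an assignment `g`:
`interpFm F g φ` is the set `φ* = {w | w ⊨ φ}`. -/
def interpFm {W : Type*} (F : Frame W) (g : Nat → Set W) : Fm → Set W
  | .var n => g n
  | .bot => ∅
  | .and φ ψ => interpFm F g φ ∩ interpFm F g ψ
  | .or φ ψ => interpFm F g φ ∪ interpFm F g ψ
  | .imp φ ψ => F.himp (interpFm F g φ) (interpFm F g ψ)
  | .box φ => {_w | F.wbot ∈ interpFm F g φ}
  | .k φ => {w | interpFm F g φ ∈ F.E w}

/-- Frames for the S5-style logic specified by `S` (one of `EL5⁻`, `EL5`,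
`EkL5⁻`, `EkL5` for k ∈ {4,5,6}). -/
def IsFrameFor (S : LogicSpec) {W : Type*} (F : EFrame W) : Prop :=
  IsEL5mFrame F ∧
  (S.hasE4 → E4Cond F.toFrame) ∧
  (S.hasE5 → E5Cond F.toFrame) ∧
  (S.hasPNB ∧ S.hasNNB → E6Cond F.toFrame) ∧
  (S.hasIntRe → KnowCond F.toFrame)

section Soundness

variable {W : Type} (F : Frame W) (g : Nat → Set W)

/-- Every interpretation is a proposition in `P`. -/
lemma interp_memP (hF : IsBaseFrame F) (hg : ∀ n, g n ∈ F.P) :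
    ∀ φ : Fm, interpFm F g φ ∈ F.P := by
  obtain ⟨hrefl, htrans, hanti, hbot, hchain, hup, hemp, huniv, hinter, hunion, himp, hk,
    hEP, hEne, hEinter, hEup, hEmono⟩ := hF
  intro φ
  induction φ with
  | var n => exact hg n
  | bot => exact hemp
  | and φ ψ ihφ ihψ => exact hinter _ ihφ _ ihψ
  | or φ ψ ihφ ihψ => exact hunion _ ihφ _ ihψ
  | imp φ ψ ihφ ihψ => exact himp _ ihφ _ ihψ
  | box φ ihφ =>
      by_cases h : F.wbot ∈ interpFm F g φ
      · have : ({_w | F.wbot ∈ interpFm F g φ} : Set W) = Set.univ := by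
          ext w; simp [h]
        rw [show interpFm F g φ.box = ({_w | F.wbot ∈ interpFm F g φ} : Set W) from rfl, this]
        exact huniv
      · have : ({_w | F.wbot ∈ interpFm F g φ} : Set W) = ∅ := by
          ext w; simp [h]
        rw [show interpFm F g φ.box = ({_w | F.wbot ∈ interpFm F g φ} : Set W) from rfl, this]
        exact hemp
  | k φ ihφ => exact hk _ ihφ

/-- Monotonicity of satisfaction. -/
lemma interp_mono (hF : IsBaseFrame F) (hg : ∀ n, g n ∈ F.P)
    {φ : Fm} {w w' : W} (hww' : F.R w w') (hw : w ∈ interpFm F g φ) :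
    w' ∈ interpFm F g φ :=
  hF.2.2.2.2.2.1 _ (interp_memP F g hF hg φ) hww' hw

/-- Existence of maximal worlds above any world. -/
lemma exists_max (hF : IsBaseFrame F) (w : W) :
    ∃ m, F.R w m ∧ F.IsMaxW m := by
  obtain ⟨hrefl, htrans, hanti, hbot, hchain, _⟩ := hF
  let r : {x // F.R w x} → {x // F.R w x} → Prop := fun a b => F.R a.1 b.1
  have hz : ∃ m : {x // F.R w x}, ∀ a, r m a → r a m := by
    apply exists_maximal_of_chains_bounded (r := r)
    · intro c hc
      rcases Set.eq_empty_or_nonempty c with hce | ⟨a, ha⟩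
      · exact ⟨⟨w, hrefl w⟩, by simp [hce]⟩
      · obtain ⟨ub, hub⟩ := hchain (Subtype.val '' c) (by
          intro x hx y hy hxy
          obtain ⟨x', hx', rfl⟩ := hx
          obtain ⟨y', hy', rfl⟩ := hy
          rcases hc hx' hy' (fun h => hxy (congrArg Subtype.val h)) with h | h
          · exact Or.inl h
          · exact Or.inr h)
        have hwu : F.R w ub := htrans a.2 (hub a.1 ⟨a, ha, rfl⟩)
        exact ⟨⟨ub, hwu⟩, fun b hb => hub b.1 ⟨b, hb, rfl⟩⟩
    · intro a b c hab hbc; exact htrans hab hbc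
  obtain ⟨m, hm⟩ := hz
  refine ⟨m.1, m.2, ?_⟩
  intro w' hw'
  have hww' : F.R w w' := htrans m.2 hw'
  exact hanti (hm ⟨w', hww'⟩ hw') hw'

/-- Validity of IPC theorems. -/
lemma ipc_valid (hF : IsBaseFrame F) (hg : ∀ n, g n ∈ F.P)
    {φ : Fm} (h : IPCThm φ) : ∀ w, w ∈ interpFm F g φ := by
  have hrefl := hF.1
  have htrans := hF.2.1
  have mono := fun {φ w w'} => interp_mono F g hF hg (φ := φ) (w := w) (w' := w')
  induction h with
  | mp h1 h2 ih1 ih2 =>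
      intro w
      exact ih1 w w (hrefl w) (ih2 w)
  | ax ha =>
      cases ha with
      | k1 φ ψ =>
          intro w w1 h1 hφ w2 h2 hψ
          exact mono h2 hφ
      | k2 φ ψ χ =>
          intro w w1 h1 h2 w2 h3 h4 w3 h5 h6
          exact h2 w3 (htrans h3 h5) h6 w3 (hrefl w3) (h4 w3 h5 h6)
      | andI φ ψ =>
          intro w w1 h1 hφ w2 h2 hψ
          exact ⟨mono h2 hφ, hψ⟩
      | andE1 φ ψ =>
          intro w w1 h1 h2
          exact h2.1
      | andE2 φ ψ =>
          intro w w1 h1 h2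
          exact h2.2
      | orI1 φ ψ =>
          intro w w1 h1 hφ
          exact Or.inl hφ
      | orI2 φ ψ =>
          intro w w1 h1 hψ
          exact Or.inr hψ
      | orE φ ψ χ =>
          intro w w1 h1 h2 w2 h3 h4 w3 h5 h6
          rcases h6 with h6 | h6
          · exact h2 w3 (htrans h3 h5) h6
          · exact h4 w3 h5 h6
      | efq φ =>
          intro w w1 h1 h2
          exact absurd h2 (Set.notMem_empty w1)

/-- Validity of the axioms of `S` on a suitable frame. -/
lemma axiom_valid (S : LogicSpec) (hF : IsBaseFrame F) (hg : ∀ n, g n ∈ F.P)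
    (h4 : S.hasE4 → E4Cond F) (h5 : S.hasE5 → E5Cond F)
    (h6p : S.hasPNB → E6Cond F) (h6n : S.hasNNB → E6Cond F)
    (hkn : S.hasIntRe → KnowCond F)
    {φ : Fm} (h : IsAxiom S φ) : ∀ w, w ∈ interpFm F g φ := by
  have hrefl := hF.1
  have htrans := hF.2.1
  have hbot := hF.2.2.2.1
  have hEP := hF.2.2.2.2.2.2.2.2.2.2.2.2.1
  have hEne := hF.2.2.2.2.2.2.2.2.2.2.2.2.2.1
  have hEinter := hF.2.2.2.2.2.2.2.2.2.2.2.2.2.2.1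
  have hEup := hF.2.2.2.2.2.2.2.2.2.2.2.2.2.2.2.1
  have hEmono := hF.2.2.2.2.2.2.2.2.2.2.2.2.2.2.2.2
  have memP := fun φ => interp_memP F g hF hg φ
  have mono := fun {φ w w'} => interp_mono F g hF hg (φ := φ) (w := w) (w' := w')
  cases h with
  | int hi => exact ipc_valid F g hF hg hi
  | a1 φ ψ =>
      intro w w1 h1 h2
      exact h2
  | a2 φ =>
      intro w w1 h1 h2
      exact mono (hbot w1) h2
  | a3 φ ψ =>
      intro w w1 h1 h2 w2 h3 h4
      exact h2 F.wbot (hrefl _) h4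
  | a4 φ _ =>
      intro w w1 h1 h2
      exact h2
  | a5 φ _ =>
      intro w w1 h1 h2 w2 h3 h4
      exact h2 w1 (hrefl w1) h4
  | kbel φ ψ _ =>
      intro w w1 h1 h2 w2 h3 h4
      -- h2 : himp φ* ψ* ∈ E w1, h4 : φ* ∈ E w2
      have h2' : F.himp (interpFm F g φ) (interpFm F g ψ) ∈ F.E w2 := hEmono h3 h2
      have hsub : F.himp (interpFm F g φ) (interpFm F g ψ) ∩ interpFm F g φ
          ⊆ interpFm F g ψ := by
        rintro x ⟨hx1, hx2⟩
        exact hx1 x (hrefl x) hx2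
      exact hEup w2 _ (hEinter w2 _ h2' _ h4) _ (memP ψ) hsub
  | core φ _ =>
      intro w w1 h1 h2
      -- h2 : wbot ∈ φ*, need φ* ∈ E wbot
      have huniv : ∀ x, x ∈ interpFm F g φ := fun x => mono (hbot x) h2
      obtain ⟨A, hA⟩ := hEne F.wbot
      exact hEup F.wbot A hA _ (memP φ) (fun x _ => huniv x)
  | intre φ hi =>
      intro w w1 h1 h2 w2 h3 h4
      obtain ⟨m, hm, hmax⟩ := exists_max F hF w2
      have hφm : m ∈ interpFm F g φ :=
        hkn hi w1 _ h2 m (htrans h3 hm) hmax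
      exact h4 m hm hφm
  | e4 φ hi =>
      intro w w1 h1 h2
      exact h4 hi w1 _ (memP φ) h2
  | e5 φ hi =>
      intro w w1 h1 h2
      exact h5 hi w1 _ (memP φ) (fun w' hw' hmem => h2 w' hw' hmem)
  | pnb φ hi =>
      intro w w1 h1 h2
      show interpFm F g φ ∈ F.E F.wbot
      rw [← h6p hi w1]
      exact h2
  | nnb φ hi =>
      intro w w1 h1 h2 w2 h3 h4
      have hc := h6n hi
      have hmem : interpFm F g φ ∈ F.E w1 := by
        have h4' : interpFm F g φ ∈ F.E w2 := h4
        rw [hc w2] at h4'; rw [hc w1]; exact h4' 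
      exact h2 w1 (hrefl w1) hmem

end Soundness

/-- Soundness w.r.t. relational semantics: let `𝓛` be one of the
logics `EL5⁻`, `EL5`, `EkL5⁻`, `EkL5` (k ∈ {4,5,6}).  If `Φ ⊢_𝓛 φ`, then every
relational model based on an `𝓛`-frame which satisfies `Φ` (at the designated
maximal world) also satisfies `φ`. -/
theorem stmt14 (S : LogicSpec) (hS : S ∈ L5Logics) (Φ : Set Fm) (φ : Fm)
    (h : Derives S Φ φ) :
    ∀ (W : Type) (F : EFrame W) (g : Nat → Set W),
      IsFrameFor S F → (∀ n, g n ∈ F.P) →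
      (∀ ψ ∈ Φ, F.wT ∈ interpFm F.toFrame g ψ) →
      F.wT ∈ interpFm F.toFrame g φ := by
  intro W F g hF hg hΦ
  obtain ⟨⟨hbase, hmax⟩, hc4, hc5, hc6, hck⟩ := hF
  have h6 : S.hasPNB → E6Cond F.toFrame := by
    rcases hS with rfl | rfl | rfl | rfl | rfl | rfl | rfl | rfl <;>
      first
        | exact fun hp => absurd hp (by simp [ELmSpec, E4LmSpec, E5LmSpec, ELSpec, E4LSpec, E5LSpec])
        | exact fun _ => hc6 ⟨trivial, trivial⟩
  have h6' : S.hasNNB → E6Cond F.toFrame := by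
    rcases hS with rfl | rfl | rfl | rfl | rfl | rfl | rfl | rfl <;>
      first
        | exact fun hp => absurd hp (by simp [ELmSpec, E4LmSpec, E5LmSpec, ELSpec, E4LSpec, E5LSpec])
        | exact fun _ => hc6 ⟨trivial, trivial⟩
  have hax := fun {ψ} (ha : IsAxiom S ψ) =>
    axiom_valid F.toFrame g S hbase hg hc4 hc5 h6 h6' hck ha
  induction h with
  | ax ha => exact hax ha F.wT
  | hyp hm => exact hΦ _ hm
  | tnd ψ _ =>
      by_cases hw : F.wT ∈ interpFm F.toFrame g ψ
      · exact Or.inl hw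
      · refine Or.inr ?_
        intro w' hw' hmem
        exact hw (hmax w' hw' ▸ hmem)
  | an ha => exact hax ha F.wbot
  | mp h1 h2 ih1 ih2 => exact ih1 F.wT (hbase.1 F.wT) ih2
end

section
/- Completeness with respect to relational semantics: let 𝓛 be EL5⁻, EL5, EkL5⁻ or EkL5 (k ∈ {4,5,6}). For every set of formulas Ψ ∪ {χ} ⊆ Fm, if every relational model based on an 𝓛-frame satisfying Ψ also satisfies χ, then Ψ ⊢_𝓛 χ. -/
namespace Stmt16

open Fm

variable {Ax : Fm → Prop} {tnd : Prop}

theorem weaken {Φ Φ' : Set Fm} (hsub : Φ ⊆ Φ') {φ : Fm} (h : Deriv Ax tnd Φ φ) :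
    Deriv Ax tnd Φ' φ := by
  induction h with
  | ax h => exact .ax h
  | hyp h => exact .hyp (hsub h)
  | tnd φ h => exact .tnd φ h
  | an h => exact .an h
  | mp _ _ ih1 ih2 => exact .mp ih1 ih2

theorem ofFalse {Φ : Set Fm} {φ : Fm} (h : Deriv Ax False Φ φ) : Deriv Ax tnd Φ φ := by
  induction h with
  | ax h => exact .ax h
  | hyp h => exact .hyp h
  | tnd φ h => exact h.elim
  | an h => exact .an h
  | mp _ _ ih1 ih2 => exact .mp ih1 ih2

theorem ipcAx {S : LogicSpec} {tnd : Prop} {Φ : Set Fm} {φ : Fm} (h : IPCAx φ) :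
    Deriv (IsAxiom S) tnd Φ φ := .ax (.int (.ax h))

theorem IPCThm.id (φ : Fm) : IPCThm (φ.imp φ) :=
  .mp (.mp (.ax (.k2 φ (φ.imp φ) φ)) (.ax (.k1 φ (φ.imp φ)))) (.ax (.k1 φ φ))

theorem deduction {S : LogicSpec} {tnd : Prop} {Φ : Set Fm} {φ ψ : Fm}
    (h : Deriv (IsAxiom S) tnd (insert φ Φ) ψ) : Deriv (IsAxiom S) tnd Φ (φ.imp ψ) := by
  induction h with
  | @ax χ h => exact .mp (ipcAx (.k1 χ φ)) (.ax h)
  | @hyp χ h =>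
    rcases h with rfl | h
    · exact .ax (.int (IPCThm.id _))
    · exact .mp (ipcAx (.k1 χ φ)) (.hyp h)
  | tnd χ h => exact .mp (ipcAx (.k1 _ φ)) (.tnd χ h)
  | @an χ h => exact .mp (ipcAx (.k1 _ φ)) (.an h)
  | @mp χ ρ _ _ ih1 ih2 => exact .mp (.mp (ipcAx (.k2 φ χ ρ)) ih1) ih2

theorem undeduct {S : LogicSpec} {tnd : Prop} {Φ : Set Fm} {φ ψ : Fm}
    (h : Deriv (IsAxiom S) tnd Φ (φ.imp ψ)) : Deriv (IsAxiom S) tnd (insert φ Φ) ψ :=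
  .mp (weaken (Set.subset_insert _ _) h) (.hyp (Set.mem_insert _ _))

theorem dcut {S : LogicSpec} {tnd : Prop} {Φ : Set Fm} {φ ψ : Fm}
    (h1 : Deriv (IsAxiom S) tnd Φ φ) (h2 : Deriv (IsAxiom S) tnd (insert φ Φ) ψ) :
    Deriv (IsAxiom S) tnd Φ ψ := .mp (deduction h2) h1

theorem chain_deriv {C : Set (Set Fm)} (hC : IsChain (· ⊆ ·) C) (hne : C.Nonempty) {φ : Fm}
    (h : Deriv Ax tnd (⋃₀ C) φ) : ∃ Δ ∈ C, Deriv Ax tnd Δ φ := by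
  induction h with
  | ax h => exact ⟨hne.choose, hne.choose_spec, .ax h⟩
  | hyp h => obtain ⟨Δ, hΔ, hφ⟩ := h; exact ⟨Δ, hΔ, .hyp hφ⟩
  | tnd φ h => exact ⟨hne.choose, hne.choose_spec, .tnd φ h⟩
  | an h => exact ⟨hne.choose, hne.choose_spec, .an h⟩
  | mp _ _ ih1 ih2 =>
    obtain ⟨Δ1, h1, d1⟩ := ih1
    obtain ⟨Δ2, h2, d2⟩ := ih2
    rcases hC.total h1 h2 with hle | hle
    · exact ⟨Δ2, h2, .mp (weaken hle d1) d2⟩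
    · exact ⟨Δ1, h1, .mp d1 (weaken hle d2)⟩

/-- Theories closed under tnd-free derivability. -/
def IsClosed (S : LogicSpec) (Δ : Set Fm) : Prop :=
  ∀ φ, Deriv (IsAxiom S) False Δ φ → φ ∈ Δ

def IsPrime (Δ : Set Fm) : Prop := ∀ φ ψ, φ.or ψ ∈ Δ → φ ∈ Δ ∨ ψ ∈ Δ

theorem lindenbaum {S : LogicSpec} {Γ : Set Fm} {φ : Fm}
    (h : ¬ Deriv (IsAxiom S) False Γ φ) :
    ∃ Δ, Γ ⊆ Δ ∧ IsClosed S Δ ∧ IsPrime Δ ∧ φ ∉ Δ ∧ ¬ Deriv (IsAxiom S) False Δ φ := by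
  obtain ⟨Δ, hsub, hmax⟩ := zorn_subset_nonempty {Δ | ¬ Deriv (IsAxiom S) False Δ φ}
    (fun c hc hchain hcne => ⟨⋃₀ c, fun hd => by
        obtain ⟨Δ, hΔ, d⟩ := chain_deriv hchain hcne hd
        exact hc hΔ d,
      fun s hs => Set.subset_sUnion_of_mem hs⟩) Γ h
  have hΔ : ¬ Deriv (IsAxiom S) False Δ φ := hmax.prop
  have hext : ∀ ψ, ψ ∉ Δ → Deriv (IsAxiom S) False (insert ψ Δ) φ := by
    intro ψ hψ
    by_contra hd
    exact hψ (hmax.2 hd (Set.subset_insert _ _) (Set.mem_insert _ _))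
  have hcl : IsClosed S Δ := by
    intro ψ hd
    by_contra hψ
    exact hΔ (dcut hd (hext ψ hψ))
  refine ⟨Δ, hsub, hcl, ?_, fun hφ => hΔ (.hyp hφ), hΔ⟩
  intro a b hab
  by_contra hne
  push_neg at hne
  exact hΔ (.mp (.mp (.mp (ipcAx (.orE a b φ)) (deduction (hext a hne.1)))
    (deduction (hext b hne.2))) (.hyp hab))

end Stmt16

namespace Stmt16

open Fm

theorem exists_T {S : LogicSpec} {Ψ : Set Fm} {χ : Fm} (h : ¬ Derives S Ψ χ) :
    ∃ T : Set Fm, Ψ ⊆ T ∧ (∀ φ, Deriv (IsAxiom S) True T φ → φ ∈ T) ∧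
      (∀ φ : Fm, φ ∈ T ∨ φ.neg ∈ T) ∧ ¬ Deriv (IsAxiom S) True T χ := by
  obtain ⟨T, hsub, hmax⟩ := zorn_subset_nonempty {Δ | ¬ Deriv (IsAxiom S) True Δ χ}
    (fun c hc hchain hcne => ⟨⋃₀ c, fun hd => by
        obtain ⟨Δ, hΔ, d⟩ := chain_deriv hchain hcne hd
        exact hc hΔ d,
      fun s hs => Set.subset_sUnion_of_mem hs⟩) Ψ h
  have hT : ¬ Deriv (IsAxiom S) True T χ := hmax.prop
  have hext : ∀ ψ, ψ ∉ T → Deriv (IsAxiom S) True (insert ψ T) χ := by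
    intro ψ hψ
    by_contra hd
    exact hψ (hmax.2 hd (Set.subset_insert _ _) (Set.mem_insert _ _))
  have hcl : ∀ φ, Deriv (IsAxiom S) True T φ → φ ∈ T := by
    intro φ hd
    by_contra hφ
    exact hT (dcut hd (hext φ hφ))
  refine ⟨T, hsub, hcl, ?_, hT⟩
  intro φ
  by_contra hne
  push_neg at hne
  exact hT (.mp (.mp (.mp (ipcAx (.orE φ φ.neg χ)) (deduction (hext φ hne.1)))
    (deduction (hext _ hne.2))) (.tnd φ trivial))

/-- The box-content of `T`. -/
def Bset (T : Set Fm) : Set Fm := {φ | Fm.box φ ∈ T}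

def IsWorld (S : LogicSpec) (T : Set Fm) (Δ : Set Fm) : Prop :=
  Bset T ⊆ Δ ∧ IsClosed S Δ ∧ IsPrime Δ ∧ Fm.bot ∉ Δ

def Wld (S : LogicSpec) (T : Set Fm) : Type := {Δ : Set Fm // IsWorld S T Δ}

def hat (S : LogicSpec) (T : Set Fm) (φ : Fm) : Set (Wld S T) := {Δ | φ ∈ Δ.1}

/-- All the properties of the logic and of the maximal theory `T` we need. -/
structure Good (S : LogicSpec) (T : Set Fm) : Prop where
  a4 : S.hasA4
  a5 : S.hasA5
  kb : S.hasKBel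
  cr : S.hasCoRe
  cl : ∀ φ, Deriv (IsAxiom S) True T φ → φ ∈ T
  comp : ∀ φ : Fm, φ ∈ T ∨ φ.neg ∈ T
  con : ¬ Deriv (IsAxiom S) True T Fm.bot

variable {S : LogicSpec} {T : Set Fm}

theorem primeT (hg : Good S T) : IsPrime T := by
  intro a b hab
  by_contra hne
  push_neg at hne
  rcases hg.comp a with ha | ha
  · exact hne.1 ha
  rcases hg.comp b with hb | hb
  · exact hne.2 hb
  exact hg.con (.mp (.mp (.mp (ipcAx (.orE a b Fm.bot)) (.hyp ha)) (.hyp hb)) (.hyp hab))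

theorem bsub (hg : Good S T) : Bset T ⊆ T := fun φ hφ => hg.cl φ (.mp (.ax (.a2 φ)) (.hyp hφ))

theorem bclosed (hg : Good S T) : IsClosed S (Bset T) := by
  intro ψ hd
  induction hd with
  | ax h => exact hg.cl _ (.an h)
  | hyp h => exact h
  | tnd _ h => exact h.elim
  | an h => exact hg.cl _ (.mp (.ax (.a4 _ hg.a4)) (.an h))
  | @mp φ ψ _ _ ih1 ih2 =>
    exact hg.cl _ (.mp (.mp (.ax (.a2 _)) (.mp (.ax (.a3 φ ψ)) (.hyp ih1))) (.hyp ih2))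

theorem bprime (hg : Good S T) : IsPrime (Bset T) := by
  intro a b hab
  exact primeT hg a.box b.box (hg.cl _ (.mp (.ax (.a1 a b)) (.hyp hab)))

theorem botnmem_bset (hg : Good S T) : Fm.bot ∉ Bset T :=
  fun h => hg.con (.mp (.ax (.a2 _)) (.hyp h))

theorem botnmem_T (hg : Good S T) : Fm.bot ∉ T := fun h => hg.con (.hyp h)

theorem box_mem_bset (hg : Good S T) {φ : Fm} (h : φ ∈ Bset T) : Fm.box φ ∈ Bset T :=
  hg.cl _ (.mp (.ax (.a4 φ hg.a4)) (.hyp h))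

theorem negbox_mem_bset (hg : Good S T) {φ : Fm} (h : φ ∉ Bset T) :
    (Fm.box φ).neg ∈ Bset T := by
  rcases hg.comp (Fm.box φ) with hb | hb
  · exact absurd hb h
  · exact hg.cl _ (.mp (.ax (.a5 φ hg.a5)) (.hyp hb))

theorem worldBset (hg : Good S T) : IsWorld S T (Bset T) :=
  ⟨subset_rfl, bclosed hg, bprime hg, botnmem_bset hg⟩

theorem worldT (hg : Good S T) : IsWorld S T T :=
  ⟨bsub hg, fun φ hd => hg.cl φ (ofFalse hd), primeT hg, botnmem_T hg⟩

theorem Wmem {w : Wld S T} {φ : Fm} (h : Deriv (IsAxiom S) False w.1 φ) : φ ∈ w.1 :=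
  w.2.2.1 φ h

theorem Wbot {w : Wld S T} : Fm.bot ∉ w.1 := w.2.2.2.2

theorem WB {w : Wld S T} {φ : Fm} (h : φ ∈ Bset T) : φ ∈ w.1 := w.2.1 h

theorem Wprime {w : Wld S T} : IsPrime w.1 := w.2.2.2.1

theorem thm_mem {w : Wld S T} {φ : Fm} (h : IPCThm φ) : φ ∈ w.1 := Wmem (.ax (.int h))

theorem extendWorld {Γ : Set Fm} (hB : Bset T ⊆ Γ) {φ : Fm}
    (h : ¬ Deriv (IsAxiom S) False Γ φ) : ∃ w : Wld S T, Γ ⊆ w.1 ∧ φ ∉ w.1 := by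
  obtain ⟨Δ, hsub, hcl, hpr, hφ, hnd⟩ := lindenbaum h
  exact ⟨⟨Δ, hB.trans hsub, hcl, hpr, fun hb => hnd (.mp (ipcAx (.efq φ)) (.hyp hb))⟩, hsub, hφ⟩

theorem hat_subset_imp (hg : Good S T) {φ ψ : Fm} (h : hat S T φ ⊆ hat S T ψ) :
    φ.imp ψ ∈ Bset T := by
  by_contra hni
  have hnd : ¬ Deriv (IsAxiom S) False (insert φ (Bset T)) ψ := fun hd =>
    hni (bclosed hg _ (deduction hd))
  obtain ⟨w, hsub, hψ⟩ := extendWorld (Set.subset_insert _ _) hnd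
  exact hψ (h (hsub (Set.mem_insert _ _)))

theorem kmono (hg : Good S T) {w : Wld S T} {φ ψ : Fm} (hK : Fm.k φ ∈ w.1)
    (h : hat S T φ ⊆ hat S T ψ) : Fm.k ψ ∈ w.1 := by
  have h1 : φ.imp ψ ∈ Bset T := hat_subset_imp hg h
  have h2 : Fm.k (φ.imp ψ) ∈ Bset T := hg.cl _ (.mp (.ax (.core _ hg.cr)) (.hyp h1))
  exact Wmem (.mp (.mp (.ax (.kbel φ ψ hg.kb)) (.hyp (WB h2))) (.hyp hK))

/-- The canonical frame. -/
def canF (hg : Good S T) : EFrame (Wld S T) where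
  R := fun w w' => w.1 ⊆ w'.1
  P := Set.range (hat S T)
  E := fun w => {A | ∃ φ, Fm.k φ ∈ w.1 ∧ A = hat S T φ}
  wbot := ⟨Bset T, worldBset hg⟩
  wT := ⟨T, worldT hg⟩

theorem hat_bot : hat S T Fm.bot = ∅ :=
  Set.eq_empty_iff_forall_notMem.mpr fun _ hw => Wbot hw

theorem hat_top : hat S T (Fm.bot.imp Fm.bot) = Set.univ :=
  Set.eq_univ_of_forall fun _ => thm_mem (IPCThm.id _)

theorem hat_and (φ ψ : Fm) : hat S T (φ.and ψ) = hat S T φ ∩ hat S T ψ := by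
  ext w
  constructor
  · intro h
    exact ⟨Wmem (.mp (ipcAx (.andE1 φ ψ)) (.hyp h)), Wmem (.mp (ipcAx (.andE2 φ ψ)) (.hyp h))⟩
  · intro h
    exact Wmem (.mp (.mp (ipcAx (.andI φ ψ)) (.hyp h.1)) (.hyp h.2))

theorem hat_or (φ ψ : Fm) : hat S T (φ.or ψ) = hat S T φ ∪ hat S T ψ := by
  ext w
  constructor
  · intro h
    exact Wprime φ ψ h
  · intro h
    rcases h with h | h
    · exact Wmem (.mp (ipcAx (.orI1 φ ψ)) (.hyp h))
    · exact Wmem (.mp (ipcAx (.orI2 φ ψ)) (.hyp h))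

theorem hat_imp (hg : Good S T) (φ ψ : Fm) :
    (canF hg).toFrame.himp (hat S T φ) (hat S T ψ) = hat S T (φ.imp ψ) := by
  ext w
  constructor
  · intro hw
    by_contra hni
    have hnd : ¬ Deriv (IsAxiom S) False (insert φ w.1) ψ := fun hd => hni (Wmem (deduction hd))
    obtain ⟨w', hsub, hψ⟩ := extendWorld ((fun _x hx => Set.mem_insert_of_mem _ (WB hx)) :
      Bset T ⊆ insert φ w.1) hnd
    exact hψ (hw w' (fun x hx => hsub (Set.mem_insert_of_mem _ hx)) (hsub (Set.mem_insert _ _)))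
  · intro hw w' hR hφ
    exact Wmem (.mp (.hyp (hR hw)) (.hyp hφ))

theorem box_mem_iff (hg : Good S T) {w : Wld S T} {φ : Fm} :
    Fm.box φ ∈ w.1 ↔ φ ∈ Bset T := by
  constructor
  · intro h
    by_contra hn
    exact Wbot (Wmem (.mp (.hyp (WB (negbox_mem_bset hg hn))) (.hyp h)))
  · intro h
    exact WB (box_mem_bset hg h)

theorem k_mem_iff (hg : Good S T) {w : Wld S T} {φ : Fm} :
    hat S T φ ∈ (canF hg).E w ↔ Fm.k φ ∈ w.1 := by
  constructor
  · rintro ⟨ψ, hK, he⟩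
    exact kmono hg hK he.symm.subset
  · intro h
    exact ⟨φ, h, rfl⟩

def canG (S : LogicSpec) (T : Set Fm) : Nat → Set (Wld S T) := fun n => hat S T (Fm.var n)

theorem truth (hg : Good S T) (φ : Fm) :
    interpFm (canF hg).toFrame (canG S T) φ = hat S T φ := by
  induction φ with
  | var n => rfl
  | bot => exact hat_bot.symm
  | and φ ψ ih1 ih2 => rw [show interpFm (canF hg).toFrame (canG S T) (φ.and ψ) =
      interpFm (canF hg).toFrame (canG S T) φ ∩ interpFm (canF hg).toFrame (canG S T) ψ from rfl,
      ih1, ih2, hat_and]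
  | or φ ψ ih1 ih2 => rw [show interpFm (canF hg).toFrame (canG S T) (φ.or ψ) =
      interpFm (canF hg).toFrame (canG S T) φ ∪ interpFm (canF hg).toFrame (canG S T) ψ from rfl,
      ih1, ih2, hat_or]
  | imp φ ψ ih1 ih2 => rw [show interpFm (canF hg).toFrame (canG S T) (φ.imp ψ) =
      (canF hg).toFrame.himp (interpFm (canF hg).toFrame (canG S T) φ)
        (interpFm (canF hg).toFrame (canG S T) ψ) from rfl, ih1, ih2, hat_imp]
  | box φ ih =>
    ext w
    rw [show (w ∈ interpFm (canF hg).toFrame (canG S T) φ.box) =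
      ((canF hg).toFrame.wbot ∈ interpFm (canF hg).toFrame (canG S T) φ) from rfl, ih]
    exact ⟨fun h => (box_mem_iff hg).mpr h, fun h => (box_mem_iff hg).mp h⟩
  | k φ ih =>
    ext w
    rw [show (w ∈ interpFm (canF hg).toFrame (canG S T) φ.k) =
      (interpFm (canF hg).toFrame (canG S T) φ ∈ (canF hg).toFrame.E w) from rfl, ih]
    exact k_mem_iff hg

end Stmt16

namespace Stmt16

open Fm

variable {S : LogicSpec} {T : Set Fm}

theorem kax_mem (hg : Good S T) {φ : Fm} (h : IsAxiom S φ) {w : Wld S T} : Fm.k φ ∈ w.1 :=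
  WB (hg.cl _ (.mp (.ax (.core φ hg.cr)) (.an h)))

theorem kset_hat (hg : Good S T) (φ : Fm) :
    (canF hg).toFrame.kset (hat S T φ) = hat S T (Fm.k φ) := by
  ext w
  exact k_mem_iff hg

theorem canBase (hg : Good S T) : IsBaseFrame (canF hg).toFrame := by
  refine ⟨fun w => subset_rfl, fun w w' w'' h1 h2 => h1.trans h2,
    fun w w' h1 h2 => Subtype.ext (subset_antisymm h1 h2),
    fun w => w.2.1, ?_, ?_, ⟨Fm.bot, hat_bot⟩, ⟨Fm.bot.imp Fm.bot, hat_top⟩,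
    ?_, ?_, ?_, ?_, ?_, ?_, ?_, ?_, ?_⟩
  · -- chains have upper bounds
    intro C hC
    rcases C.eq_empty_or_nonempty with rfl | ⟨w0, hw0⟩
    · exact ⟨(canF hg).wbot, fun w hw => hw.elim⟩
    have hchain : IsChain (· ⊆ ·) (Subtype.val '' C) := hC.image_of_map_rel ((canF hg).toFrame.R) (· ⊆ ·) Subtype.val (fun _ _ h => h)
    have hne : (Subtype.val '' C).Nonempty := ⟨w0.1, Set.mem_image_of_mem _ hw0⟩
    have hWU : IsWorld S T (⋃₀ (Subtype.val '' C)) := by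
      refine ⟨fun x hx => Set.mem_sUnion.mpr ⟨w0.1, Set.mem_image_of_mem _ hw0, WB hx⟩,
        ?_, ?_, ?_⟩
      · intro φ hd
        obtain ⟨Δ, hΔ, d⟩ := chain_deriv hchain hne hd
        obtain ⟨w, hw, rfl⟩ := hΔ
        exact Set.mem_sUnion.mpr ⟨w.1, Set.mem_image_of_mem _ hw, Wmem d⟩
      · intro a b hab
        obtain ⟨Δ, hΔ, hab'⟩ := Set.mem_sUnion.mp hab
        obtain ⟨w, hw, rfl⟩ := hΔ
        rcases Wprime a b hab' with h | h
        · exact Or.inl (Set.mem_sUnion.mpr ⟨w.1, Set.mem_image_of_mem _ hw, h⟩)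
        · exact Or.inr (Set.mem_sUnion.mpr ⟨w.1, Set.mem_image_of_mem _ hw, h⟩)
      · intro hb
        obtain ⟨Δ, hΔ, hb'⟩ := Set.mem_sUnion.mp hb
        obtain ⟨w, hw, rfl⟩ := hΔ
        exact Wbot hb'
    exact ⟨⟨_, hWU⟩, fun w hw x hx => Set.mem_sUnion.mpr ⟨w.1, Set.mem_image_of_mem _ hw, hx⟩⟩
  · -- upper sets
    rintro A ⟨φ, rfl⟩ w w' hR hw
    exact hR hw
  · -- closed under ∩
    rintro A ⟨φ, rfl⟩ B ⟨ψ, rfl⟩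
    exact ⟨φ.and ψ, hat_and φ ψ⟩
  · -- closed under ∪
    rintro A ⟨φ, rfl⟩ B ⟨ψ, rfl⟩
    exact ⟨φ.or ψ, hat_or φ ψ⟩
  · -- closed under ⊃
    rintro A ⟨φ, rfl⟩ B ⟨ψ, rfl⟩
    exact ⟨φ.imp ψ, (hat_imp hg φ ψ).symm ▸ rfl⟩
  · -- closed under K
    rintro A ⟨φ, rfl⟩
    exact ⟨Fm.k φ, (kset_hat hg φ).symm⟩
  · -- E ⊆ P
    rintro w A ⟨φ, _, rfl⟩
    exact ⟨φ, rfl⟩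
  · -- E nonempty
    intro w
    exact ⟨hat S T (Fm.bot.imp Fm.bot), Fm.bot.imp Fm.bot,
      kax_mem hg (.int (IPCThm.id Fm.bot)), rfl⟩
  · -- E closed under ∩
    rintro w A ⟨φ, hKφ, rfl⟩ B ⟨ψ, hKψ, rfl⟩
    have hk1 : Fm.k (φ.imp (ψ.imp (φ.and ψ))) ∈ w.1 := kax_mem hg (.int (.ax (.andI φ ψ)))
    have d1 : Deriv (IsAxiom S) False w.1 (Fm.k (ψ.imp (φ.and ψ))) :=
      .mp (.mp (.ax (.kbel φ (ψ.imp (φ.and ψ)) hg.kb)) (.hyp hk1)) (.hyp hKφ)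
    exact ⟨φ.and ψ, Wmem (.mp (.mp (.ax (.kbel ψ (φ.and ψ) hg.kb)) d1) (.hyp hKψ)),
      (hat_and φ ψ).symm⟩
  · -- E upward closed in P
    rintro w A ⟨φ, hK, rfl⟩ B ⟨ψ, rfl⟩ hsub
    exact ⟨ψ, kmono hg hK hsub, rfl⟩
  · -- E monotone
    rintro w w' hR A ⟨φ, hK, rfl⟩
    exact ⟨φ, hR hK, rfl⟩

theorem canMaxT (hg : Good S T) : (canF hg).toFrame.IsMaxW (canF hg).wT := by
  intro w hR
  refine Subtype.ext (subset_antisymm ?_ hR)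
  intro φ hφ
  rcases hg.comp φ with h | h
  · exact h
  · exact absurd (Wmem (.mp (.hyp (hR h)) (.hyp hφ))) Wbot

theorem canE4 (hg : Good S T) (h4 : S.hasE4) : E4Cond (canF hg).toFrame := by
  rintro w A - ⟨φ, hK, rfl⟩
  rw [kset_hat hg]
  exact ⟨Fm.k φ, Wmem (.mp (.ax (.e4 φ h4)) (.hyp hK)), rfl⟩

theorem canE5 (hg : Good S T) (h5 : S.hasE5) : E5Cond (canF hg).toFrame := by
  rintro w A ⟨ψ, rfl⟩ hA
  have hKn : ∀ w' : Wld S T, w.1 ⊆ w'.1 → Fm.k ψ ∉ w'.1 := fun w' hR hmem =>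
    hA w' hR ⟨ψ, hmem, rfl⟩
  have hd : Deriv (IsAxiom S) False (insert (Fm.k ψ) w.1) Fm.bot := by
    by_contra hnd
    obtain ⟨w', hsub, -⟩ := extendWorld (fun x hx => Set.mem_insert_of_mem _ (WB hx)) hnd
    exact hKn w' (fun x hx => hsub (Set.mem_insert_of_mem _ hx)) (hsub (Set.mem_insert _ _))
  have hneg : (Fm.k ψ).neg ∈ w.1 := Wmem (deduction hd)
  refine ⟨(Fm.k ψ).neg, Wmem (.mp (.ax (.e5 ψ h5)) (.hyp hneg)), ?_⟩
  rw [kset_hat hg, ← hat_bot (S := S) (T := T), hat_imp hg]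
  rfl

theorem canE6 (hg : Good S T) (hpnb : S.hasPNB) : E6Cond (canF hg).toFrame := by
  intro w
  ext A
  constructor
  · rintro ⟨φ, hK, rfl⟩
    refine ⟨φ, ?_, rfl⟩
    show Fm.k φ ∈ Bset T
    by_contra hn
    have h1 : (Fm.box (Fm.k φ)).neg ∈ w.1 := WB (negbox_mem_bset hg hn)
    exact Wbot (Wmem (.mp (.hyp h1) (.mp (.ax (.pnb φ hpnb)) (.hyp hK))))
  · rintro ⟨φ, hK, rfl⟩
    exact ⟨φ, WB hK, rfl⟩

theorem canKnow (hg : Good S T) (hir : S.hasIntRe) : KnowCond (canF hg).toFrame := by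
  rintro w A ⟨φ, hK, rfl⟩ w' hR hmax
  have hcomp : ∀ ψ : Fm, ψ ∈ w'.1 ∨ ψ.neg ∈ w'.1 := by
    intro ψ
    by_cases hn : ψ.neg ∈ w'.1
    · exact Or.inr hn
    left
    by_contra hψ
    have hnd : ¬ Deriv (IsAxiom S) False (insert ψ w'.1) Fm.bot := fun hd =>
      hn (Wmem (deduction hd))
    obtain ⟨w'', hsub, -⟩ := extendWorld (fun x hx => Set.mem_insert_of_mem _ (WB hx)) hnd
    have heq := hmax w'' (fun x hx => hsub (Set.mem_insert_of_mem _ hx))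
    exact hψ (heq ▸ hsub (Set.mem_insert _ _))
  have hnn : φ.neg.neg ∈ w'.1 := Wmem (.mp (.ax (.intre φ hir)) (.hyp (hR hK)))
  rcases hcomp φ with h | h
  · exact h
  · exact absurd (Wmem (.mp (.hyp hnn) (.hyp h))) Wbot

theorem flags {S : LogicSpec} (hS : S ∈ L5Logics) :
    S.hasKBel ∧ S.hasCoRe ∧ S.hasA4 ∧ S.hasA5 := by
  have h45 : 4 ≤ 5 := by omega
  have h55 : 5 ≤ 5 := le_refl 5
  simp only [L5Logics, Set.mem_insert_iff, Set.mem_singleton_iff] at hS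
  rcases hS with rfl|rfl|rfl|rfl|rfl|rfl|rfl|rfl <;>
    exact ⟨trivial, trivial, h45, h55⟩

end Stmt16


/-- Completeness w.r.t. relational semantics: let `𝓛` be `EL5⁻`,
`EL5`, `EkL5⁻` or `EkL5` (k ∈ {4,5,6}).  If every relational model based on an
`𝓛`-frame which satisfies `Ψ` also satisfies `χ`, then `Ψ ⊢_𝓛 χ`. -/
theorem stmt16 (S : LogicSpec) (hS : S ∈ L5Logics) (Ψ : Set Fm) (χ : Fm)
    (h : ∀ (W : Type) (F : EFrame W) (g : Nat → Set W),
      IsFrameFor S F → (∀ n, g n ∈ F.P) →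
      (∀ ψ ∈ Ψ, F.wT ∈ interpFm F.toFrame g ψ) →
      F.wT ∈ interpFm F.toFrame g χ) :
    Derives S Ψ χ := by
  by_contra hnd
  obtain ⟨T, hΨ, hTc, hTcomp, hTχ⟩ := Stmt16.exists_T hnd
  obtain ⟨hkb, hcr, ha4, ha5⟩ := Stmt16.flags hS
  have hg : Stmt16.Good S T := ⟨ha4, ha5, hkb, hcr, hTc, hTcomp,
    fun hd => hTχ (.mp (Stmt16.ipcAx (.efq χ)) hd)⟩
  have hframe : IsFrameFor S (Stmt16.canF hg) :=
    ⟨⟨Stmt16.canBase hg, Stmt16.canMaxT hg⟩, fun h4 => Stmt16.canE4 hg h4,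
      fun h5 => Stmt16.canE5 hg h5, fun h6 => Stmt16.canE6 hg h6.1,
      fun hir => Stmt16.canKnow hg hir⟩
  have hmem := h (Stmt16.Wld S T) (Stmt16.canF hg) (Stmt16.canG S T) hframe
    (fun n => ⟨Fm.var n, rfl⟩)
    (fun ψ hψ => by rw [Stmt16.truth hg]; exact hΨ hψ)
  rw [Stmt16.truth hg] at hmem
  exact hTχ (.hyp hmem)
end

section
/- Every IEL⁻-frame is an E5L5⁻-frame and every IEL-frame is an E5L5-frame; that is, the condition (IntCo) implies both the E4L5⁻-frame condition (A ∈ E(w) implies KA ∈ E(w)) and the E5L5⁻-frame condition (if A ∉ E(w') for all w' ≥ w, then (KA ⊃ ∅) ∈ E(w)). -/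
/-- Every `IEL⁻`-frame is an `E5L5⁻`-frame and every `IEL`-frame
is an `E5L5`-frame: the condition (IntCo) implies both the `E4L5⁻`-frame
condition and the `E5L5⁻`-frame condition. -/
theorem stmt17 {W : Type*} (F : Frame W) :
    (IsIELmFrame F → E4Cond F ∧ E5Cond F) ∧
    (IsIELFrame F → E4Cond F ∧ E5Cond F ∧ KnowCond F) := by
  have key : IsIELmFrame F → E4Cond F ∧ E5Cond F := by
    rintro ⟨hb, hic⟩
    obtain ⟨_, _, _, _, _, _, hempty, _, _, _, hhimp, hkset, _, _, _, _, _⟩ := hb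
    constructor
    · intro w A hAP hAE
      exact hic w (F.kset A) (hkset A hAP) hAE
    · intro w A hAP hnot
      refine hic w (F.himp (F.kset A) ∅) (hhimp _ (hkset A hAP) _ hempty) ?_
      intro w' hR hw'
      exact absurd hw' (hnot w' hR)
  exact ⟨key, fun h => ⟨(key h.1).1, (key h.1).2, h.2⟩⟩
end
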